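/- arXiv:1805.12581 — 3 statements merged into one kernel-verified Lean document; each statement's English description precedes it below -/
import Mathlib

section
/- If \bar{\lambda}_0 \ne 0, the relative error of approximating J_d by \tilde{J}_d satisfies E\|J_d - \tilde{J}_d\|_{2,d}^2 / E\|J_d\|_{2,d}^2 = (\bar{\Lambda}/\bar{\lambda}_0) \cdot (1/d); if \bar{\Lambda} \ne 0, then E\|Z_d - \tilde{Z}_d\|_{2,d}^2 / E\|Z_d\|_{2,d}^2 = 1/d. -/
open MeasureTheory Set

/-- Type synonym for `ℝ` carrying the measure `volume.restrict (Icc 0 1)`. -/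
def UI : Type := ℝ

instance : MeasurableSpace UI := inferInstanceAs (MeasurableSpace ℝ)

noncomputable instance : MeasureSpace UI :=
  { volume := (volume : Measure ℝ).restrict (Icc (0:ℝ) 1) }

lemma UI_volume_eq : (volume : Measure UI) = (volume : Measure ℝ).restrict (Icc (0:ℝ) 1) := rfl

instance : IsProbabilityMeasure (volume : Measure UI) := by
  constructor
  show (volume : Measure ℝ).restrict (Icc (0:ℝ) 1) (univ : Set ℝ) = 1
  rw [Measure.restrict_apply_univ, Real.volume_Icc]
  norm_num

lemma aux_res (d : ℕ) :
    (volume : Measure (Fin d → ℝ)).restrict (Icc 0 1) = (volume : Measure (Fin d → UI)) := by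
  rw [MeasureTheory.volume_pi]
  refine (Measure.pi_eq (μ := fun _ : Fin d => (volume : Measure UI)) fun (s : Fin d → Set ℝ) hs => ?_).symm
  have hs' : ∀ i, @MeasurableSet ℝ Real.measurableSpace (s i) := hs
  change ((Measure.pi fun _ => (volume : Measure ℝ)).restrict (Icc (0 : Fin d → ℝ) 1))
    (univ.pi s) = ∏ i, (volume : Measure UI) (s i)
  rw [Measure.restrict_apply (MeasurableSet.univ_pi hs'), ← Set.pi_univ_Icc,
    ← Set.pi_inter_distrib]
  simp only [Pi.zero_apply, Pi.one_apply]
  rw [Measure.pi_pi]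
  refine Finset.prod_congr rfl fun i _ => ?_
  rw [UI_volume_eq]; exact (Measure.restrict_apply (hs' i)).symm

lemma prod_pick_one {d : ℕ} (f : ℝ → ℝ) (l : Fin d) (t : Fin d → UI) :
    f (t l) = ∏ i, (if i = l then f else fun _ => (1:ℝ)) (t i) := by
  rw [Finset.prod_eq_single l (fun i _ hi => by simp [hi]) (by simp)]
  simp

lemma prod_pick_two {d : ℕ} (f g : ℝ → ℝ) {l l' : Fin d} (h : l ≠ l') (t : Fin d → UI) :
    f (t l) * g (t l') =
      ∏ i, (if i = l then f else if i = l' then g else fun _ => (1:ℝ)) (t i) := by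
  have hl' : l' ∈ Finset.univ.erase l := by simp [Finset.mem_erase, h.symm]
  rw [← Finset.mul_prod_erase Finset.univ _ (Finset.mem_univ l),
    ← Finset.mul_prod_erase (Finset.univ.erase l)
      (fun i => (if i = l then f else if i = l' then g else fun _ => (1:ℝ)) (t i)) hl',
    Finset.prod_eq_one (fun i hi => ?_), if_pos rfl, if_neg h.symm, if_pos rfl, mul_one]
  simp only [Finset.mem_erase] at hi
  simp [hi.1, hi.2.1]

lemma UI_integral_const_one : ∫ _ : UI, (1:ℝ) = 1 := by simp

lemma eval_one {d : ℕ} (f : ℝ → ℝ) (l : Fin d) :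
    ∫ t : Fin d → UI, f (t l) = ∫ s : UI, f s := by
  simp_rw [prod_pick_one f l]
  refine (integral_fintype_prod_eq_prod (μ := fun _ => (volume : Measure UI)) (f := fun i => ((if i = l then f else fun _ => (1:ℝ)) : UI → ℝ))).trans ?_
  rw [Finset.prod_eq_single l (fun i _ hi => by simp [hi]) (by simp)]
  simp

lemma eval_two {d : ℕ} (f g : ℝ → ℝ) {l l' : Fin d} (h : l ≠ l') :
    ∫ t : Fin d → UI, f (t l) * g (t l') = (∫ s : UI, f s) * ∫ s : UI, g s := by
  simp_rw [prod_pick_two f g h]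
  refine (integral_fintype_prod_eq_prod (μ := fun _ => (volume : Measure UI)) (f := fun i => ((if i = l then f else if i = l' then g else fun _ => (1:ℝ)) : UI → ℝ))).trans ?_
  have hl' : l' ∈ Finset.univ.erase l := by simp [Finset.mem_erase, h.symm]
  rw [← Finset.mul_prod_erase Finset.univ _ (Finset.mem_univ l),
    ← Finset.mul_prod_erase (Finset.univ.erase l)
      (fun i => ∫ x : UI, ((if i = l then f else if i = l' then g else fun _ => (1:ℝ)) : UI → ℝ) x) hl',
    Finset.prod_eq_one (fun i hi => ?_), mul_one]
  · simp [h.symm]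
  simp only [Finset.mem_erase] at hi
  simp [hi.1, hi.2.1]

lemma eval_one_int {d : ℕ} {f : ℝ → ℝ} (hf : Integrable f (volume : Measure UI)) (l : Fin d) :
    Integrable (fun t : Fin d → UI => f (t l)) (volume : Measure (Fin d → UI)) := by
  simp_rw [prod_pick_one f l]
  exact Integrable.fintype_prod fun i => by
    by_cases hi : i = l
    · simp only [hi, if_true]; exact hf
    · simp only [hi, if_false]; exact integrable_const (1:ℝ)

lemma eval_two_int {d : ℕ} {f g : ℝ → ℝ} (hf : Integrable f (volume : Measure UI))
    (hg : Integrable g (volume : Measure UI)) {l l' : Fin d} (h : l ≠ l') :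
    Integrable (fun t : Fin d → UI => f (t l) * g (t l')) (volume : Measure (Fin d → UI)) := by
  simp_rw [prod_pick_two f g h]
  exact Integrable.fintype_prod fun i => by
    by_cases hi : i = l
    · subst hi; simp only [if_true]; exact hf
    · by_cases hi' : i = l'
      · subst hi'; simp only [hi, if_false, if_true]; exact hg
      · simp only [hi, hi', if_false]; exact integrable_const (1:ℝ)

lemma box_measure_eq (d : ℕ) (f : (Fin d → ℝ) → ℝ) :
    ∫ t in Icc (0 : Fin d → ℝ) 1, f t = ∫ t : Fin d → UI, f t :=
  congrArg (fun m : Measure (Fin d → ℝ) => ∫ t, f t ∂m) (aux_res d)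

lemma UI_setIntegral_eq (f : ℝ → ℝ) : ∫ s : UI, f s = ∫ s in Icc (0:ℝ) 1, f s := rfl

lemma box_eval_one {d : ℕ} (f : ℝ → ℝ) (l : Fin d) :
    ∫ t in Icc (0 : Fin d → ℝ) 1, f (t l) = ∫ s in Icc (0:ℝ) 1, f s := by
  rw [box_measure_eq d (fun t => f (t l)), eval_one, UI_setIntegral_eq]

lemma box_eval_two {d : ℕ} (f g : ℝ → ℝ) {l l' : Fin d} (h : l ≠ l') :
    ∫ t in Icc (0 : Fin d → ℝ) 1, f (t l) * g (t l')
      = (∫ s in Icc (0:ℝ) 1, f s) * ∫ s in Icc (0:ℝ) 1, g s := by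
  rw [box_measure_eq d (fun t => f (t l) * g (t l')), eval_two f g h,
    UI_setIntegral_eq, UI_setIntegral_eq]

lemma box_prob (d : ℕ) :
    IsProbabilityMeasure ((volume : Measure (Fin d → ℝ)).restrict (Icc 0 1)) := by
  rw [aux_res d]; exact (inferInstance : IsProbabilityMeasure (volume : Measure (Fin d → UI)))

lemma box_int_one {d : ℕ} {f : ℝ → ℝ} (hf : IntegrableOn f (Icc (0:ℝ) 1)) (l : Fin d) :
    Integrable (fun t : Fin d → ℝ => f (t l))
      ((volume : Measure (Fin d → ℝ)).restrict (Icc 0 1)) := by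
  rw [aux_res d]; exact eval_one_int hf l

lemma box_int_two {d : ℕ} {f g : ℝ → ℝ} (hf : IntegrableOn f (Icc (0:ℝ) 1))
    (hg : IntegrableOn g (Icc (0:ℝ) 1)) {l l' : Fin d} (h : l ≠ l') :
    Integrable (fun t : Fin d → ℝ => f (t l) * g (t l'))
      ((volume : Measure (Fin d → ℝ)).restrict (Icc 0 1)) := by
  rw [aux_res d]; exact eval_two_int hf hg h

lemma aux_int_mul {α : Type*} [MeasurableSpace α] {m : Measure α} {f g : α → ℝ}
    (hf : AEStronglyMeasurable f m) (hg : AEStronglyMeasurable g m)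
    (hf2 : Integrable (fun x => (f x)^2) m) (hg2 : Integrable (fun x => (g x)^2) m) :
    Integrable (fun x => f x * g x) m := by
  refine Integrable.mono' ((hf2.add hg2).div_const 2) (hf.mul hg) (ae_of_all _ fun x => ?_)
  have h1 := two_mul_le_add_sq |f x| |g x|
  simp only [Pi.add_apply]
  rw [Real.norm_eq_abs, abs_mul]
  nlinarith [sq_abs (f x), sq_abs (g x), abs_nonneg (f x), abs_nonneg (g x)]

lemma aux_int_of_sq {α : Type*} [MeasurableSpace α] {m : Measure α} [IsFiniteMeasure m]
    {f : α → ℝ} (hf : AEStronglyMeasurable f m)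
    (hf2 : Integrable (fun x => (f x)^2) m) : Integrable f m := by
  refine Integrable.mono' ((hf2.add (integrable_const 1)).div_const 2) hf (ae_of_all _ fun x => ?_)
  simp only [Pi.add_apply]
  rw [Real.norm_eq_abs]
  nlinarith [sq_abs (f x), abs_nonneg (f x), sq_nonneg (|f x| - 1)]

lemma sum_ite_diag {n : ℕ} (l : Fin n) (a b : ℝ) :
    ∑ l' : Fin n, (if l = l' then a else b) = a + ((n:ℝ) - 1) * b := by
  have h : ∀ l' : Fin n, (if l = l' then a else b) = (if l = l' then a - b else 0) + b := by
    intro l'; split <;> ring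
  rw [Finset.sum_congr rfl (fun l' _ => h l'), Finset.sum_add_distrib, Finset.sum_ite_eq,
    if_pos (Finset.mem_univ l), Finset.sum_const, Finset.card_univ, Fintype.card_fin,
    nsmul_eq_mul]
  ring


lemma box_const {d : ℕ} (c : ℝ) : ∫ _ in Icc (0 : Fin d → ℝ) 1, c = c := by
  rw [setIntegral_const]
  have h1 : (volume : Measure (Fin d → ℝ)) (Icc 0 1) = 1 := by
    rw [← Measure.restrict_apply_univ]
    exact (box_prob d).measure_univ
  rw [measureReal_def, h1]
  simp

set_option maxHeartbeats 2000000 in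
/-- relative errors of the approximations `J̃_d` of `J_d` and `Z̃_d` of `Z_d`:
if `λ̄₀ ≠ 0` then `E‖J_d - J̃_d‖² / E‖J_d‖² = (Λ̄/λ̄₀)·(1/d)`, and if `Λ̄ ≠ 0` then
`E‖Z_d - Z̃_d‖² / E‖Z_d‖² = 1/d`. -/
theorem relative_errors
    {Ω : Type*} [MeasurableSpace Ω] (μ : Measure Ω) [IsProbabilityMeasure μ]
    (d : ℕ) (hd : 0 < d)
    (X : Fin d → Ω → ℝ → ℝ) (K : ℝ → ℝ → ℝ)
    (hKcont : ContinuousOn (Function.uncurry K) (Icc (0:ℝ) 1 ×ˢ Icc (0:ℝ) 1))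
    (hXm : ∀ j, Measurable (Function.uncurry (X j)))
    (hmean : ∀ j, ∀ t ∈ Icc (0:ℝ) 1, ∫ ω, X j ω t ∂μ = 0)
    (hcov : ∀ i j, ∀ t ∈ Icc (0:ℝ) 1, ∀ s ∈ Icc (0:ℝ) 1,
      ∫ ω, X i ω t * X j ω s ∂μ = if i = j then K t s else 0)
    (hint : ∀ i j, ∀ t ∈ Icc (0:ℝ) 1, ∀ s ∈ Icc (0:ℝ) 1,
      Integrable (fun ω => X i ω t * X j ω s) μ)
    (hL2 : ∀ j, Integrable (fun p : Ω × ℝ => (X j p.1 p.2)^2)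
      (μ.prod (volume.restrict (Icc (0:ℝ) 1))))
    (I : Fin d → Ω → ℝ) (J : Ω → ℝ) (Y Z Jt Zt : Ω → (Fin d → ℝ) → ℝ)
    (hI : ∀ j ω, I j ω = ∫ s in (0:ℝ)..1, X j ω s)
    (hJ : ∀ ω, J ω = ∑ j, I j ω)
    (hY : ∀ ω t, Y ω t = ∑ j, X j ω (t j))
    (hZ : ∀ ω t, Z ω t = Y ω t - J ω)
    (hJt : ∀ ω t, Jt ω t = ∑ j, (∑ l, X j ω (t l)) / d)
    (hZt : ∀ ω t, Zt ω t = Y ω t - Jt ω t)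
    (lam0 Lbar : ℝ)
    (hlam0 : lam0 = ∫ t in (0:ℝ)..1, ∫ s in (0:ℝ)..1, K t s)
    (hLbar : Lbar = (∫ s in (0:ℝ)..1, K s s) - lam0) :
    (lam0 ≠ 0 →
      (∫ ω, (∫ t in Icc (0 : Fin d → ℝ) 1, (J ω - Jt ω t)^2) ∂μ)
        / (∫ ω, (∫ t in Icc (0 : Fin d → ℝ) 1, (J ω)^2) ∂μ)
        = (Lbar / lam0) * (1 / d))
    ∧ (Lbar ≠ 0 →
      (∫ ω, (∫ t in Icc (0 : Fin d → ℝ) 1, (Z ω t - Zt ω t)^2) ∂μ)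
        / (∫ ω, (∫ t in Icc (0 : Fin d → ℝ) 1, (Z ω t)^2) ∂μ)
        = 1 / d) := by
  classical
  haveI hPB : IsProbabilityMeasure ((volume : Measure (Fin d → ℝ)).restrict (Icc 0 1)) :=
    box_prob d
  haveI hprob1 : IsProbabilityMeasure ((volume : Measure ℝ).restrict (Icc (0:ℝ) 1)) := by
    constructor
    rw [Measure.restrict_apply_univ, Real.volume_Icc]
    norm_num
  have hdR : (d:ℝ) ≠ 0 := Nat.cast_ne_zero.mpr hd.ne'
  set ν : Measure ℝ := (volume : Measure ℝ).restrict (Icc (0:ℝ) 1) with hνdef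
  have hXsm : ∀ j (ω : Ω), Measurable fun s => X j ω s := fun j ω =>
    (hXm j).of_uncurry_left
  set P : Fin d → Ω → ℝ := fun j ω => ∫ s in Icc (0:ℝ) 1, X j ω s with hPdef
  set QX : Fin d → Fin d → Ω → ℝ :=
    fun j j' ω => ∫ s in Icc (0:ℝ) 1, X j ω s * X j' ω s with hQXdef
  have hIP : ∀ j ω, I j ω = P j ω := by
    intro j ω
    rw [hI, intervalIntegral.integral_of_le zero_le_one, hPdef, ← integral_Icc_eq_integral_Ioc]
  have hJP : ∀ ω, J ω = ∑ j, P j ω := fun ω => by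
    rw [hJ]; exact Finset.sum_congr rfl fun j _ => hIP j ω
  have Hprod : ∀ j j', Integrable (fun p : Ω × ℝ => X j p.1 p.2 * X j' p.1 p.2)
      (μ.prod ν) := by
    intro j j'
    exact aux_int_mul (hXm j).aestronglyMeasurable (hXm j').aestronglyMeasurable
      (hL2 j) (hL2 j')
  have IntQX : ∀ j j', Integrable (fun ω => QX j j' ω) μ := by
    intro j j'
    exact (Hprod j j').integral_prod_left
  have hKdiag : ∫ s in Icc (0:ℝ) 1, K s s = lam0 + Lbar := by
    rw [hLbar, intervalIntegral.integral_of_le zero_le_one, ← integral_Icc_eq_integral_Ioc]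
    ring
  have EQX : ∀ j j', ∫ ω, QX j j' ω ∂μ = if j = j' then lam0 + Lbar else 0 := by
    intro j j'
    simp only [hQXdef]
    refine (integral_integral_swap (f := fun ω s => X j ω s * X j' ω s)
      (Hprod j j')).trans ?_
    rw [show (∫ s, (∫ ω, X j ω s * X j' ω s ∂μ) ∂ν)
        = ∫ s in Icc (0:ℝ) 1, (∫ ω, X j ω s * X j' ω s ∂μ) from rfl]
    rw [setIntegral_congr_fun measurableSet_Icc (fun s hs => hcov j j' s hs s hs)]
    by_cases h : j = j'
    · subst h
      simp only [if_pos rfl]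
      exact hKdiag
    · simp [h]
  -- measure preserving projections
  have pfst : MeasurePreserving Prod.fst (ν.prod ν) ν := by
    constructor
    · exact measurable_fst
    · rw [Measure.map_fst_prod, measure_univ, one_smul]
  have psnd : MeasurePreserving Prod.snd (ν.prod ν) ν := by
    constructor
    · exact measurable_snd
    · rw [Measure.map_snd_prod, measure_univ, one_smul]
  have m1 : MeasurePreserving (fun p : Ω × (ℝ × ℝ) => (p.1, p.2.1))
      (μ.prod (ν.prod ν)) (μ.prod ν) := MeasurePreserving.prod (MeasurePreserving.id μ) pfst
  have m2 : MeasurePreserving (fun p : Ω × (ℝ × ℝ) => (p.1, p.2.2))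
      (μ.prod (ν.prod ν)) (μ.prod ν) := MeasurePreserving.prod (MeasurePreserving.id μ) psnd
  have Gprod : ∀ j j', Integrable (fun p : Ω × (ℝ × ℝ) => X j p.1 p.2.1 * X j' p.1 p.2.2)
      (μ.prod (ν.prod ν)) := by
    intro j j'
    have h1 : Integrable (fun p : Ω × (ℝ × ℝ) => (X j p.1 p.2.1)^2) (μ.prod (ν.prod ν)) :=
      (m1.integrable_comp ((hXm j).pow_const 2).aestronglyMeasurable).mpr (hL2 j)
    have h2 : Integrable (fun p : Ω × (ℝ × ℝ) => (X j' p.1 p.2.2)^2) (μ.prod (ν.prod ν)) :=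
      (m2.integrable_comp ((hXm j').pow_const 2).aestronglyMeasurable).mpr (hL2 j')
    have mm1 : Measurable fun p : Ω × (ℝ × ℝ) => X j p.1 p.2.1 :=
      (hXm j).comp (measurable_fst.prodMk (measurable_fst.comp measurable_snd))
    have mm2 : Measurable fun p : Ω × (ℝ × ℝ) => X j' p.1 p.2.2 :=
      (hXm j').comp (measurable_fst.prodMk (measurable_snd.comp measurable_snd))
    exact aux_int_mul mm1.aestronglyMeasurable mm2.aestronglyMeasurable h1 h2
  have hPPrep : ∀ j j' (ω : Ω), P j ω * P j' ω
      = ∫ q : ℝ × ℝ, X j ω q.1 * X j' ω q.2 ∂(ν.prod ν) := by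
    intro j j' ω
    rw [integral_prod_mul]
  have IntPP : ∀ j j', Integrable (fun ω => P j ω * P j' ω) μ := by
    intro j j'
    have := (Gprod j j').integral_prod_left
    simpa only [← hPPrep j j'] using this
  have hms : MeasurableSet (Icc (0:ℝ) 1 ×ˢ Icc (0:ℝ) 1) :=
    measurableSet_Icc.prod measurableSet_Icc
  have hprodres : ν.prod ν = ((volume : Measure ℝ).prod volume).restrict
      (Icc (0:ℝ) 1 ×ˢ Icc (0:ℝ) 1) := Measure.prod_restrict _ _
  have hKaesm : AEStronglyMeasurable (fun q : ℝ × ℝ => K q.1 q.2) (ν.prod ν) := by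
    rw [hprodres]
    exact hKcont.aestronglyMeasurable hms
  have hKint : Integrable (fun q : ℝ × ℝ => K q.1 q.2) (ν.prod ν) := by
    obtain ⟨C, hC⟩ := (isCompact_Icc.prod isCompact_Icc).exists_bound_of_continuousOn hKcont
    refine Integrable.mono' (integrable_const C) hKaesm ?_
    rw [hprodres]
    exact (ae_restrict_iff' hms).2 (ae_of_all _ fun q hq => hC q hq)
  have hlam0' : ∫ q : ℝ × ℝ, K q.1 q.2 ∂(ν.prod ν) = lam0 := by
    rw [← integral_integral hKint, hlam0]
    rw [show (∫ t, (∫ s, K t s ∂ν) ∂ν)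
        = ∫ t in Icc (0:ℝ) 1, (∫ s in Icc (0:ℝ) 1, K t s) from rfl]
    simp_rw [intervalIntegral.integral_of_le zero_le_one, integral_Icc_eq_integral_Ioc]
  have EPP : ∀ j j', ∫ ω, P j ω * P j' ω ∂μ = if j = j' then lam0 else 0 := by
    intro j j'
    simp only [hPPrep j j']
    refine (integral_integral_swap (f := fun ω (q : ℝ × ℝ) => X j ω q.1 * X j' ω q.2)
      (Gprod j j')).trans ?_
    rw [hprodres]
    rw [setIntegral_congr_fun hms (fun q hq => hcov j j' q.1 hq.1 q.2 hq.2)]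
    by_cases h : j = j'
    · subst h
      simp only [if_pos rfl]
      rw [← hprodres]
      exact hlam0' 
    · simp [h]
  -- almost-every ω is "good"
  have hG : ∀ᵐ ω ∂μ, ∀ j, Integrable (fun s => (X j ω s)^2) ν :=
    ae_all_iff.mpr fun j => (hL2 j).prod_right_ae
  have hJsq : ∀ ω, (J ω)^2 = ∑ j, ∑ j', P j ω * P j' ω := by
    intro ω
    rw [hJP, sq, Finset.sum_mul_sum]
  have IntJ2 : Integrable (fun ω => (J ω)^2) μ := by
    simp only [hJsq]
    exact integrable_finset_sum _ fun j _ => integrable_finset_sum _ fun j' _ => IntPP j j'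
  have EJ2 : ∫ ω, (J ω)^2 ∂μ = d * lam0 := by
    simp only [hJsq]
    rw [integral_finset_sum _ fun j _ =>
      integrable_finset_sum _ fun j' _ => IntPP j j']
    have : ∀ j : Fin d, ∫ ω, ∑ j', P j ω * P j' ω ∂μ = lam0 := by
      intro j
      rw [integral_finset_sum _ fun j' _ => IntPP j j']
      rw [Finset.sum_congr rfl fun j' _ => EPP j j', sum_ite_diag j lam0 0]
      ring
    rw [Finset.sum_congr rfl fun j _ => this j, Finset.sum_const, Finset.card_univ,
      Fintype.card_fin, nsmul_eq_mul]
  have VB : (∫ ω, (∫ t in Icc (0 : Fin d → ℝ) 1, (J ω)^2) ∂μ) = d * lam0 := by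
    simp only [fun ω : Ω => box_const (d := d) ((J ω)^2)]
    exact EJ2
  have VAinner : ∀ᵐ ω ∂μ, (∫ t in Icc (0 : Fin d → ℝ) 1, (J ω - Jt ω t)^2)
      = ((∑ j, ∑ j', QX j j' ω) - (J ω)^2) / d := by
    filter_upwards [hG] with ω hω
    have gX : ∀ j, Integrable (fun s => X j ω s) ν := fun j =>
      aux_int_of_sq (hXsm j ω).aestronglyMeasurable (hω j)
    have gXX : ∀ j j', Integrable (fun s => X j ω s * X j' ω s) ν := fun j j' =>
      aux_int_mul (hXsm j ω).aestronglyMeasurable (hXsm j' ω).aestronglyMeasurable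
        (hω j) (hω j')
    set S : ℝ → ℝ := fun s => ∑ j, X j ω s with hSdef
    have hSint : Integrable S ν := integrable_finset_sum _ fun j _ => gX j
    have hSS : Integrable (fun s => S s * S s) ν := by
      have : ∀ s : ℝ, S s * S s = ∑ j, ∑ j', X j ω s * X j' ω s := fun s =>
        Finset.sum_mul_sum _ _ _ _
      simp only [this]
      exact integrable_finset_sum _ fun j _ => integrable_finset_sum _ fun j' _ => gXX j j'
    have hJtS : ∀ t : Fin d → ℝ, Jt ω t = (∑ l, S (t l)) / d := by
      intro t
      rw [hJt, ← Finset.sum_div]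
      congr 1
      exact Finset.sum_comm
    have hIS : ∫ s in Icc (0:ℝ) 1, S s = J ω := by
      rw [show (∫ s in Icc (0:ℝ) 1, S s) = ∫ s, S s ∂ν from rfl, hSdef,
        integral_finset_sum _ fun j _ => gX j, hJP]
    have hQS : ∫ s in Icc (0:ℝ) 1, S s * S s = ∑ j, ∑ j', QX j j' ω := by
      have h1 : ∀ s : ℝ, S s * S s = ∑ j, ∑ j', X j ω s * X j' ω s := fun s =>
        Finset.sum_mul_sum _ _ _ _
      rw [show (∫ s in Icc (0:ℝ) 1, S s * S s) = ∫ s, S s * S s ∂ν from rfl]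
      simp only [h1]
      rw [integral_finset_sum _ fun j _ =>
        integrable_finset_sum _ fun j' _ => gXX j j']
      exact Finset.sum_congr rfl fun j _ =>
        integral_finset_sum _ fun j' _ => gXX j j'
    have hint2 : ∀ l l' : Fin d, Integrable (fun t : Fin d → ℝ => S (t l) * S (t l'))
        ((volume : Measure (Fin d → ℝ)).restrict (Icc 0 1)) := by
      intro l l'
      by_cases h : l = l'
      · subst h; exact box_int_one (f := fun s => S s * S s) hSS l
      · exact box_int_two hSint hSint h
    have hval2 : ∀ l l' : Fin d, (∫ t in Icc (0 : Fin d → ℝ) 1, S (t l) * S (t l'))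
        = if l = l' then (∫ s in Icc (0:ℝ) 1, S s * S s)
          else (∫ s in Icc (0:ℝ) 1, S s) * (∫ s in Icc (0:ℝ) 1, S s) := by
      intro l l'
      by_cases h : l = l'
      · subst h; rw [if_pos rfl]; exact box_eval_one (fun s => S s * S s) l
      · rw [if_neg h]; exact box_eval_two S S h
    have hIu : Integrable (fun t : Fin d → ℝ => ∑ l, S (t l))
        ((volume : Measure (Fin d → ℝ)).restrict (Icc 0 1)) :=
      integrable_finset_sum _ fun l _ => box_int_one hSint l
    have hIv : Integrable (fun t : Fin d → ℝ => (∑ l, S (t l)) * (∑ l', S (t l')))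
        ((volume : Measure (Fin d → ℝ)).restrict (Icc 0 1)) := by
      have h1 : ∀ t : Fin d → ℝ, (∑ l, S (t l)) * (∑ l', S (t l'))
          = ∑ l, ∑ l', S (t l) * S (t l') := fun t => Finset.sum_mul_sum _ _ _ _
      simp only [h1]
      exact integrable_finset_sum _ fun l _ => integrable_finset_sum _ fun l' _ => hint2 l l'
    have e1 : (∫ t in Icc (0 : Fin d → ℝ) 1, ∑ l, S (t l)) = d * J ω := by
      rw [integral_finset_sum _ fun l _ => box_int_one hSint l,
        Finset.sum_congr rfl fun l _ => (box_eval_one S l).trans hIS,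
        Finset.sum_const, Finset.card_univ, Fintype.card_fin, nsmul_eq_mul]
    have e2 : (∫ t in Icc (0 : Fin d → ℝ) 1, (∑ l, S (t l)) * (∑ l', S (t l')))
        = d * (∑ j, ∑ j', QX j j' ω) + ((d:ℝ) * ((d:ℝ) - 1)) * (J ω)^2 := by
      have h1 : ∀ t : Fin d → ℝ, (∑ l, S (t l)) * (∑ l', S (t l'))
          = ∑ l, ∑ l', S (t l) * S (t l') := fun t => Finset.sum_mul_sum _ _ _ _
      simp only [h1]
      rw [integral_finset_sum _ fun l _ =>
        integrable_finset_sum _ fun l' _ => hint2 l l']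
      rw [Finset.sum_congr rfl fun l _ =>
        integral_finset_sum _ fun l' _ => hint2 l l']
      rw [Finset.sum_congr rfl fun l _ => Finset.sum_congr rfl fun l' _ => hval2 l l']
      rw [Finset.sum_congr rfl fun l _ => sum_ite_diag l _ _]
      rw [Finset.sum_const, Finset.card_univ, Fintype.card_fin, nsmul_eq_mul, hQS, hIS]
      ring
    have hexp : ∀ t : Fin d → ℝ, (J ω - Jt ω t)^2
        = (J ω)^2 + ((-(2 * J ω / d)) * (∑ l, S (t l))
          + (1/(d:ℝ)^2) * ((∑ l, S (t l)) * (∑ l', S (t l')))) := by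
      intro t
      rw [hJtS t]
      field_simp
      ring
    simp only [hexp]
    have hg2 : Integrable (fun t : Fin d → ℝ => (-(2 * J ω / d)) * (∑ l, S (t l))
        + (1/(d:ℝ)^2) * ((∑ l, S (t l)) * (∑ l', S (t l'))))
        ((volume : Measure (Fin d → ℝ)).restrict (Icc 0 1)) :=
      (hIu.const_mul _).add (hIv.const_mul _)
    have split1 := integral_add (μ := (volume : Measure (Fin d → ℝ)).restrict (Icc 0 1))
      (f := fun _ : Fin d → ℝ => (J ω)^2)
      (g := fun t : Fin d → ℝ => (-(2 * J ω / d)) * (∑ l, S (t l))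
        + (1/(d:ℝ)^2) * ((∑ l, S (t l)) * (∑ l', S (t l'))))
      (integrable_const _) hg2
    have split2 := integral_add (μ := (volume : Measure (Fin d → ℝ)).restrict (Icc 0 1))
      (f := fun t : Fin d → ℝ => (-(2 * J ω / d)) * (∑ l, S (t l)))
      (g := fun t : Fin d → ℝ => (1/(d:ℝ)^2) * ((∑ l, S (t l)) * (∑ l', S (t l'))))
      (hIu.const_mul _) (hIv.const_mul _)
    rw [split1, split2, integral_const_mul, integral_const_mul, box_const, e1, e2]
    field_simp
    ring
  have VA : (∫ ω, (∫ t in Icc (0 : Fin d → ℝ) 1, (J ω - Jt ω t)^2) ∂μ) = Lbar := by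
    rw [integral_congr_ae VAinner, integral_div,
      integral_sub (integrable_finset_sum _ fun j _ =>
        integrable_finset_sum _ fun j' _ => IntQX j j') IntJ2,
      integral_finset_sum _ fun j _ =>
        integrable_finset_sum _ fun j' _ => IntQX j j']
    rw [Finset.sum_congr rfl fun j _ =>
      (integral_finset_sum _ fun j' _ => IntQX j j').trans
        ((Finset.sum_congr rfl fun j' _ => EQX j j').trans (sum_ite_diag j _ _))]
    rw [Finset.sum_const, Finset.card_univ, Fintype.card_fin, nsmul_eq_mul, EJ2]
    field_simp
    ring
  have VC : (∫ ω, (∫ t in Icc (0 : Fin d → ℝ) 1, (Z ω t - Zt ω t)^2) ∂μ) = Lbar := by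
    have hptw : ∀ (ω : Ω) (t : Fin d → ℝ), (Z ω t - Zt ω t)^2 = (J ω - Jt ω t)^2 := by
      intro ω t
      rw [hZ, hZt]
      ring
    simp only [hptw]
    exact VA
  have VDinner : ∀ᵐ ω ∂μ, (∫ t in Icc (0 : Fin d → ℝ) 1, (Z ω t)^2)
      = (∑ j, ∑ j', if j = j' then QX j j ω else P j ω * P j' ω) - (J ω)^2 := by
    filter_upwards [hG] with ω hω
    have gX : ∀ j, Integrable (fun s => X j ω s) ν := fun j =>
      aux_int_of_sq (hXsm j ω).aestronglyMeasurable (hω j)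
    have gXX : ∀ j j', Integrable (fun s => X j ω s * X j' ω s) ν := fun j j' =>
      aux_int_mul (hXsm j ω).aestronglyMeasurable (hXsm j' ω).aestronglyMeasurable
        (hω j) (hω j')
    have hexp : ∀ t : Fin d → ℝ, (Z ω t)^2
        = (J ω)^2 + ((-(2 * J ω)) * (∑ j, X j ω (t j))
          + (∑ j, X j ω (t j)) * (∑ j', X j' ω (t j'))) := by
      intro t
      rw [hZ, hY]
      ring
    have hint2 : ∀ j j' : Fin d, Integrable (fun t : Fin d → ℝ => X j ω (t j) * X j' ω (t j'))
        ((volume : Measure (Fin d → ℝ)).restrict (Icc 0 1)) := by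
      intro j j'
      by_cases h : j = j'
      · subst h; exact box_int_one (f := fun s => X j ω s * X j ω s) (gXX j j) j
      · exact box_int_two (gX j) (gX j') h
    have hval2 : ∀ j j' : Fin d, (∫ t in Icc (0 : Fin d → ℝ) 1, X j ω (t j) * X j' ω (t j'))
        = if j = j' then QX j j ω else P j ω * P j' ω := by
      intro j j'
      by_cases h : j = j'
      · subst h
        rw [if_pos rfl]
        exact box_eval_one (fun s => X j ω s * X j ω s) j
      · rw [if_neg h]
        exact box_eval_two (fun s => X j ω s) (fun s => X j' ω s) h
    have hIu : Integrable (fun t : Fin d → ℝ => ∑ j, X j ω (t j))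
        ((volume : Measure (Fin d → ℝ)).restrict (Icc 0 1)) :=
      integrable_finset_sum _ fun j _ => box_int_one (gX j) j
    have hIv : Integrable (fun t : Fin d → ℝ => (∑ j, X j ω (t j)) * (∑ j', X j' ω (t j')))
        ((volume : Measure (Fin d → ℝ)).restrict (Icc 0 1)) := by
      have h1 : ∀ t : Fin d → ℝ, (∑ j, X j ω (t j)) * (∑ j', X j' ω (t j'))
          = ∑ j, ∑ j', X j ω (t j) * X j' ω (t j') := fun t => Finset.sum_mul_sum _ _ _ _
      simp only [h1]
      exact integrable_finset_sum _ fun j _ => integrable_finset_sum _ fun j' _ => hint2 j j'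
    have e1 : (∫ t in Icc (0 : Fin d → ℝ) 1, ∑ j, X j ω (t j)) = J ω := by
      rw [integral_finset_sum _ fun j _ => box_int_one (gX j) j,
        Finset.sum_congr rfl fun j _ => box_eval_one (fun s => X j ω s) j, hJP]
    have e2 : (∫ t in Icc (0 : Fin d → ℝ) 1, (∑ j, X j ω (t j)) * (∑ j', X j' ω (t j')))
        = ∑ j, ∑ j', if j = j' then QX j j ω else P j ω * P j' ω := by
      have h1 : ∀ t : Fin d → ℝ, (∑ j, X j ω (t j)) * (∑ j', X j' ω (t j'))
          = ∑ j, ∑ j', X j ω (t j) * X j' ω (t j') := fun t => Finset.sum_mul_sum _ _ _ _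
      simp only [h1]
      rw [integral_finset_sum _ fun j _ =>
        integrable_finset_sum _ fun j' _ => hint2 j j']
      rw [Finset.sum_congr rfl fun j _ =>
        integral_finset_sum _ fun j' _ => hint2 j j']
      exact Finset.sum_congr rfl fun j _ => Finset.sum_congr rfl fun j' _ => hval2 j j'
    simp only [hexp]
    have hg2 : Integrable (fun t : Fin d → ℝ => (-(2 * J ω)) * (∑ j, X j ω (t j))
        + (∑ j, X j ω (t j)) * (∑ j', X j' ω (t j')))
        ((volume : Measure (Fin d → ℝ)).restrict (Icc 0 1)) :=
      (hIu.const_mul _).add hIv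
    have split1 := integral_add (μ := (volume : Measure (Fin d → ℝ)).restrict (Icc 0 1))
      (f := fun _ : Fin d → ℝ => (J ω)^2)
      (g := fun t : Fin d → ℝ => (-(2 * J ω)) * (∑ j, X j ω (t j))
        + (∑ j, X j ω (t j)) * (∑ j', X j' ω (t j')))
      (integrable_const _) hg2
    have split2 := integral_add (μ := (volume : Measure (Fin d → ℝ)).restrict (Icc 0 1))
      (f := fun t : Fin d → ℝ => (-(2 * J ω)) * (∑ j, X j ω (t j)))
      (g := fun t : Fin d → ℝ => (∑ j, X j ω (t j)) * (∑ j', X j' ω (t j')))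
      (hIu.const_mul _) hIv
    rw [split1, split2, integral_const_mul, box_const, e1, e2]
    ring
  have IntIte : ∀ j j' : Fin d, Integrable
      (fun ω => if j = j' then QX j j ω else P j ω * P j' ω) μ := by
    intro j j'
    by_cases h : j = j'
    · subst h; simpa using IntQX j j
    · simp only [if_neg h]; exact IntPP j j'
  have EIte : ∀ j j' : Fin d, (∫ ω, (if j = j' then QX j j ω else P j ω * P j' ω) ∂μ)
      = if j = j' then lam0 + Lbar else 0 := by
    intro j j'
    by_cases h : j = j'
    · subst h
      simp only [if_pos rfl]
      exact (EQX j j).trans (if_pos rfl)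
    · simp only [if_neg h]
      exact (EPP j j').trans (if_neg h)
  have VD : (∫ ω, (∫ t in Icc (0 : Fin d → ℝ) 1, (Z ω t)^2) ∂μ) = d * Lbar := by
    rw [integral_congr_ae VDinner,
      integral_sub (integrable_finset_sum _ fun j _ =>
        integrable_finset_sum _ fun j' _ => IntIte j j') IntJ2,
      integral_finset_sum _ fun j _ =>
        integrable_finset_sum _ fun j' _ => IntIte j j']
    rw [Finset.sum_congr rfl fun j _ =>
      (integral_finset_sum _ fun j' _ => IntIte j j').trans
        ((Finset.sum_congr rfl fun j' _ => EIte j j').trans (sum_ite_diag j _ _))]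
    rw [Finset.sum_const, Finset.card_univ, Fintype.card_fin, nsmul_eq_mul, EJ2]
    ring
  constructor
  · intro hl0
    rw [VA, VB, div_mul_div_comm, mul_one, mul_comm lam0 (d:ℝ)]
  · intro hLb
    rw [VC, VD, div_eq_div_iff (mul_ne_zero hdR hLb) hdR]
    ring
end

section
/- The eigenvalues of the covariance operator of the centred Wiener process W^c(t) = W(t) - \int_0^1 W(s) ds, with covariance function K^{W^c}(t,s) = min(t,s) + (t^2+s^2)/2 - t - s + 1/3, are \bar{\lambda}_k = 1/(\pi^2 k^2), k = 1, 2, 3, .... In particular, the trace of this covariance operator equals \int_0^1 K^{W^c}(s,s) ds = 1/6. -/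
open MeasureTheory Set Real

/-- Covariance function of the centred Wiener process. -/
noncomputable def Kc (t s : ℝ) : ℝ := min t s + (t^2 + s^2) / 2 - t - s + 1/3


lemma hasDerivAt_lin (ω s : ℝ) : HasDerivAt (fun x : ℝ => ω * x) ω s := by
  simpa using (hasDerivAt_id s).const_mul ω

lemma antider (ω α β : ℝ) (hω : ω ≠ 0) (s : ℝ) :
    HasDerivAt (fun x => (α + β*x + x^2/2) * Real.sin (ω*x)/ω + (β+x)*Real.cos (ω*x)/ω^2
      - Real.sin (ω*x)/ω^3)
    ((α + β*s + s^2/2) * Real.cos (ω*s)) s := by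
  have hsin : HasDerivAt (fun x : ℝ => Real.sin (ω*x)) (Real.cos (ω*s) * ω) s :=
    (hasDerivAt_lin ω s).sin
  have hcos : HasDerivAt (fun x : ℝ => Real.cos (ω*x)) (-Real.sin (ω*s) * ω) s :=
    (hasDerivAt_lin ω s).cos
  have hq : HasDerivAt (fun x : ℝ => α + β*x + x^2/2) (β + s) s := by
    have : HasDerivAt (fun x : ℝ => α + β*x + x^2/2) (0 + β + 2*s/2) s := by
      apply HasDerivAt.add
      · exact (hasDerivAt_const s α).add ((hasDerivAt_lin β s).congr_deriv rfl)
      · exact ((hasDerivAt_pow 2 s).div_const 2).congr_deriv (by push_cast; ring)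
    exact this.congr_deriv (by ring)
  have hl : HasDerivAt (fun x : ℝ => β + x) 1 s := by simpa using (hasDerivAt_id s).const_add β
  have h := (((hq.mul hsin).div_const ω).add ((hl.mul hcos).div_const (ω^2))).sub
    (hsin.div_const (ω^3))
  refine h.congr_deriv ?_
  field_simp
  ring

lemma continuous_Kc (t : ℝ) : Continuous (fun s => Kc t s) := by
  unfold Kc; fun_prop

lemma eigen_int (n : ℕ) (hn : n ≠ 0) (t : ℝ) (ht : t ∈ Icc (0:ℝ) 1) :
    ∫ s in (0:ℝ)..1, Kc t s * Real.cos ((n:ℝ)*π*s)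
      = (1/((n:ℝ)*π)^2) * Real.cos ((n:ℝ)*π*t) := by
  rcases ht with ⟨ht0, ht1⟩
  set ω : ℝ := (n:ℝ)*π with hωdef
  have hω : ω ≠ 0 := by
    have : (n:ℝ) ≠ 0 := Nat.cast_ne_zero.2 hn
    positivity
  have hint : ∀ a b : ℝ, IntervalIntegrable (fun s => Kc t s * Real.cos (ω*s)) volume a b :=
    fun a b => (((continuous_Kc t).mul (by fun_prop))).intervalIntegrable a b
  rw [← intervalIntegral.integral_add_adjacent_intervals (hint 0 t) (hint t 1)]
  have huIcc1 : uIcc (0:ℝ) t = Icc 0 t := uIcc_of_le ht0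
  have huIcc2 : uIcc t (1:ℝ) = Icc t 1 := uIcc_of_le ht1
  have h1 : ∫ s in (0:ℝ)..t, Kc t s * Real.cos (ω*s)
      = ∫ s in (0:ℝ)..t, ((t^2/2 - t + 1/3) + 0*s + s^2/2) * Real.cos (ω*s) := by
    apply intervalIntegral.integral_congr
    intro s hs
    rw [huIcc1] at hs
    have : min t s = s := min_eq_right hs.2
    simp only [Kc, this]; ring_nf
  have h2 : ∫ s in t..(1:ℝ), Kc t s * Real.cos (ω*s)
      = ∫ s in t..(1:ℝ), ((t^2/2 + 1/3) + (-1)*s + s^2/2) * Real.cos (ω*s) := by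
    apply intervalIntegral.integral_congr
    intro s hs
    rw [huIcc2] at hs
    have : min t s = t := min_eq_left hs.1
    simp only [Kc, this]; ring_nf
  rw [h1, h2,
    intervalIntegral.integral_eq_sub_of_hasDerivAt (fun s _ => antider ω (t^2/2 - t + 1/3) 0 hω s)
      ((by fun_prop : Continuous fun s:ℝ => ((t^2/2 - t + 1/3) + 0*s + s^2/2) * Real.cos (ω*s)).intervalIntegrable _ _),
    intervalIntegral.integral_eq_sub_of_hasDerivAt (fun s _ => antider ω (t^2/2 + 1/3) (-1) hω s)
      ((by fun_prop : Continuous fun s:ℝ => ((t^2/2 + 1/3) + (-1)*s + s^2/2) * Real.cos (ω*s)).intervalIntegrable _ _)]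
  have hsω : Real.sin ω = 0 := by rw [hωdef]; exact Real.sin_nat_mul_pi n
  simp only [mul_zero, mul_one, Real.sin_zero, Real.cos_zero, hsω]
  field_simp
  ring

lemma eigen_identity (lam : ℝ) (φ : ℝ → ℝ) (hφ : Continuous φ)
    (heq : ∀ t ∈ Icc (0:ℝ) 1, ∫ s in (0:ℝ)..1, Kc t s * φ s = lam * φ t) :
    ∀ t ∈ Icc (0:ℝ) 1, lam * φ t =
      (∫ s in (0:ℝ)..t, s * φ s) - t * (∫ s in (0:ℝ)..t, φ s)
        + t^2/2 * (∫ s in (0:ℝ)..1, φ s) + (∫ s in (0:ℝ)..1, (s^2/2 - s + 1/3) * φ s) := by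
  intro t ht
  rw [← heq t ht]
  have hsplitKc : ∀ s : ℝ, Kc t s * φ s
      = min t s * φ s + ((t^2/2 - t) * φ s + (s^2/2 - s + 1/3) * φ s) := by
    intro s; simp only [Kc]; ring
  rw [intervalIntegral.integral_congr (g := fun s => min t s * φ s
      + ((t^2/2 - t) * φ s + (s^2/2 - s + 1/3) * φ s)) (fun s _ => hsplitKc s)]
  have i1 : IntervalIntegrable (fun s => min t s * φ s) volume 0 1 :=
    (((continuous_const.min continuous_id).mul hφ)).intervalIntegrable _ _
  have i2 : IntervalIntegrable (fun s : ℝ => (t^2/2 - t) * φ s) volume 0 1 :=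
    (continuous_const.mul hφ).intervalIntegrable _ _
  have i3 : IntervalIntegrable (fun s : ℝ => (s^2/2 - s + 1/3) * φ s) volume 0 1 :=
    ((by fun_prop : Continuous fun s : ℝ => (s^2/2 - s + 1/3)).mul hφ).intervalIntegrable _ _
  rw [intervalIntegral.integral_add i1 (i2.add i3), intervalIntegral.integral_add i2 i3,
    intervalIntegral.integral_const_mul]
  -- min split
  have imin : ∀ a b : ℝ, IntervalIntegrable (fun s => min t s * φ s) volume a b :=
    fun a b => (((continuous_const.min continuous_id).mul hφ)).intervalIntegrable _ _
  have hmin : ∫ s in (0:ℝ)..1, min t s * φ s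
      = (∫ s in (0:ℝ)..t, s * φ s) + t * ∫ s in t..(1:ℝ), φ s := by
    rw [← intervalIntegral.integral_add_adjacent_intervals (imin 0 t) (imin t 1)]
    congr 1
    · apply intervalIntegral.integral_congr
      intro s hs
      rw [uIcc_of_le ht.1] at hs
      show (min t s) * φ s = s * φ s
      rw [min_eq_right hs.2]
    · rw [← intervalIntegral.integral_const_mul]
      apply intervalIntegral.integral_congr
      intro s hs
      rw [uIcc_of_le ht.2] at hs
      show (min t s) * φ s = t * φ s
      rw [min_eq_left hs.1]
  have hC : ∫ s in t..(1:ℝ), φ s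
      = (∫ s in (0:ℝ)..1, φ s) - ∫ s in (0:ℝ)..t, φ s := by
    rw [← intervalIntegral.integral_add_adjacent_intervals
      (hφ.intervalIntegrable 0 t) (hφ.intervalIntegrable t 1)]
    ring
  rw [hmin, hC]
  ring

lemma ode_unique (lam C : ℝ) (hlam : lam ≠ 0) (φ F P G g : ℝ → ℝ)
    (hF : ∀ x, HasDerivAt F (P x) x) (hP : ∀ x, HasDerivAt P ((C - φ x)/lam) x)
    (hG : ∀ x, HasDerivAt G (g x) x) (hg : ∀ x, HasDerivAt g ((C - G x)/lam) x)
    (hFφ : ∀ t ∈ Icc (0:ℝ) 1, F t = φ t)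
    (h0 : F 0 = G 0) (h0' : P 0 = g 0) :
    ∀ t ∈ Icc (0:ℝ) 1, φ t = G t := by
  set v : ℝ → ℝ × ℝ → ℝ × ℝ := fun _ p => (p.2, (C - p.1)/lam) with hv
  set K : NNReal := Real.toNNReal (max 1 |lam|⁻¹) with hK
  have hKc : (K : ℝ) = max 1 |lam|⁻¹ := Real.coe_toNNReal _ (le_trans zero_le_one (le_max_left _ _))
  have hlip : ∀ t, LipschitzWith K (v t) := by
    intro t
    apply LipschitzWith.of_dist_le_mul
    intro p q
    rw [Prod.dist_eq, Prod.dist_eq, hKc]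
    simp only [hv]
    have h2 : dist ((C - p.1)/lam) ((C - q.1)/lam) = |lam|⁻¹ * dist p.1 q.1 := by
      rw [Real.dist_eq, Real.dist_eq, div_sub_div_same, abs_div]
      rw [show C - p.1 - (C - q.1) = -(p.1 - q.1) by ring, abs_neg]
      rw [div_eq_inv_mul]
    rw [h2]
    apply max_le
    · calc dist p.2 q.2 ≤ 1 * max (dist p.1 q.1) (dist p.2 q.2) := by
            rw [one_mul]; exact le_max_right _ _
        _ ≤ _ := by
            apply mul_le_mul_of_nonneg_right (le_max_left _ _)
            positivity
    · calc |lam|⁻¹ * dist p.1 q.1 ≤ |lam|⁻¹ * max (dist p.1 q.1) (dist p.2 q.2) := by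
            apply mul_le_mul_of_nonneg_left (le_max_left _ _); positivity
        _ ≤ _ := by
            apply mul_le_mul_of_nonneg_right (le_max_right _ _)
            positivity
  have main : EqOn (fun t => (F t, P t)) (fun t => (G t, g t)) (Icc (0:ℝ) 1) := by
    apply ODE_solution_unique (v := v) hlip
    · have cF : Continuous F := continuous_iff_continuousAt.2 fun x => (hF x).continuousAt
      have cP : Continuous P := continuous_iff_continuousAt.2 fun x => (hP x).continuousAt
      exact (cF.prodMk cP).continuousOn
    · intro t ht
      have hd : HasDerivAt (fun t => (F t, P t)) (P t, (C - φ t)/lam) t := (hF t).prodMk (hP t)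
      have : (P t, (C - φ t)/lam) = v t (F t, P t) := by
        simp only [hv]
        rw [hFφ t (Ico_subset_Icc_self ht)]
      rw [← this]
      exact hd.hasDerivWithinAt
    · have cG : Continuous G := continuous_iff_continuousAt.2 fun x => (hG x).continuousAt
      have cg : Continuous g := continuous_iff_continuousAt.2 fun x => (hg x).continuousAt
      exact (cG.prodMk cg).continuousOn
    · intro t ht
      have hd : HasDerivAt (fun t => (G t, g t)) (g t, (C - G t)/lam) t := (hG t).prodMk (hg t)
      exact hd.hasDerivWithinAt
    · simp [h0, h0']
  intro t ht
  rw [← hFφ t ht]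
  have := main ht
  exact congrArg Prod.fst this

lemma const_contra (lam : ℝ) (hlam : lam ≠ 0) (φ : ℝ → ℝ) (C : ℝ)
    (heq0 : ∫ s in (0:ℝ)..1, Kc 0 s * φ s = lam * φ 0)
    (hconst : ∀ t ∈ Icc (0:ℝ) 1, φ t = C)
    (hne : ∃ t ∈ Icc (0:ℝ) 1, φ t ≠ 0) : False := by
  have h1 : ∫ s in (0:ℝ)..1, Kc 0 s * φ s = ∫ s in (0:ℝ)..1, (s^2/2 - s + 1/3) * C := by
    apply intervalIntegral.integral_congr
    intro s hs
    rw [uIcc_of_le zero_le_one] at hs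
    show Kc 0 s * φ s = (s^2/2 - s + 1/3) * C
    rw [hconst s hs]
    simp only [Kc]
    rw [min_eq_left hs.1]
    ring
  have h2 : ∫ s in (0:ℝ)..1, (s^2/2 - s + 1/3) * C = 0 := by
    rw [intervalIntegral.integral_eq_sub_of_hasDerivAt
      (f := fun x : ℝ => (x^3/6 - x^2/2 + x/3) * C) (f' := fun s => (s^2/2 - s + 1/3) * C)]
    · norm_num
    · intro x _
      have hb : HasDerivAt (fun x : ℝ => x^3/6 - x^2/2 + x/3) (x^2/2 - x + 1/3) x := by
        have : HasDerivAt (fun x : ℝ => x^3/6 - x^2/2 + x/3) (3*x^2/6 - 2*x/2 + 1/3) x := by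
          apply HasDerivAt.add
          apply HasDerivAt.sub
          · exact (hasDerivAt_pow 3 x).div_const 6 |>.congr_deriv (by push_cast; ring)
          · exact (hasDerivAt_pow 2 x).div_const 2 |>.congr_deriv (by push_cast; ring)
          · exact (hasDerivAt_id x).div_const 3 |>.congr_deriv (by ring)
        exact this.congr_deriv (by ring)
      exact hb.mul_const C
    · exact (Continuous.mul (by fun_prop) continuous_const).intervalIntegrable _ _
  have hC0 : C = 0 := by
    have hφ0 : φ 0 = C := hconst 0 (by norm_num)
    have : lam * C = 0 := by rw [← hφ0, ← heq0, h1, h2]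
    exact (mul_eq_zero.1 this).resolve_left hlam
  obtain ⟨t0, ht0, hne0⟩ := hne
  exact hne0 (by rw [hconst t0 ht0, hC0])

lemma trace_Kc : (∫ s in (0:ℝ)..1, Kc s s) = 1/6 := by
  have h : ∀ s ∈ uIcc (0:ℝ) 1, Kc s s = s^2 - s + 1/3 := by
    intro s _; simp only [Kc, min_self]; ring
  rw [intervalIntegral.integral_congr h]
  rw [intervalIntegral.integral_eq_sub_of_hasDerivAt (f := fun x : ℝ => x^3/3 - x^2/2 + x/3)
    (f' := fun s => s^2 - s + 1/3)]
  · norm_num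
  · intro x _
    have : HasDerivAt (fun x : ℝ => x^3/3 - x^2/2 + x/3) (3*x^2/3 - 2*x/2 + 1/3) x := by
      apply HasDerivAt.add
      apply HasDerivAt.sub
      · exact (hasDerivAt_pow 3 x).div_const 3 |>.congr_deriv (by push_cast; ring)
      · exact (hasDerivAt_pow 2 x).div_const 2 |>.congr_deriv (by push_cast; ring)
      · exact (hasDerivAt_id x).div_const 3 |>.congr_deriv (by ring)
    exact this.congr_deriv (by ring)
  · exact ((continuous_pow 2).sub continuous_id |>.add continuous_const).intervalIntegrable _ _

/-- the eigenvalues of the covariance operator of the centred Wiener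
process are exactly `1/(π² k²)`, `k = 1, 2, ...`, and the trace equals
`∫_0^1 K^{W^c}(s,s) ds = 1/6`. -/
theorem centred_wiener_eigenvalues :
    (∀ k : ℕ, ∃ φ : ℝ → ℝ, Continuous φ ∧ (∃ t ∈ Icc (0:ℝ) 1, φ t ≠ 0) ∧
      ∀ t ∈ Icc (0:ℝ) 1,
        ∫ s in (0:ℝ)..1, Kc t s * φ s = (1 / (π^2 * ((k:ℝ)+1)^2)) * φ t)
    ∧ (∀ lam : ℝ, lam ≠ 0 → ∀ φ : ℝ → ℝ, Continuous φ →
        (∃ t ∈ Icc (0:ℝ) 1, φ t ≠ 0) →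
        (∀ t ∈ Icc (0:ℝ) 1, ∫ s in (0:ℝ)..1, Kc t s * φ s = lam * φ t) →
        ∃ k : ℕ, lam = 1 / (π^2 * ((k:ℝ)+1)^2))
    ∧ (∫ s in (0:ℝ)..1, Kc s s) = 1/6 := by
  refine ⟨?_, ?_, ?_⟩
  · -- Part 1
    intro k
    refine ⟨fun t => Real.cos (((k:ℝ)+1)*π*t), by fun_prop, ⟨0, by norm_num, by simp⟩, ?_⟩
    intro t ht
    have h := eigen_int (k+1) (Nat.succ_ne_zero k) t ht
    push_cast at h
    rw [h]
    congr 1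
    ring
  · -- Part 2
    intro lam hlam φ hφ hne heq
    set C := ∫ s in (0:ℝ)..1, φ s with hCdef
    set E := ∫ s in (0:ℝ)..1, (s^2/2 - s + 1/3) * φ s with hEdef
    have hid := eigen_identity lam φ hφ heq
    set u := fun x : ℝ => ∫ s in (0:ℝ)..x, φ s with hudef
    set w := fun x : ℝ => ∫ s in (0:ℝ)..x, s * φ s with hwdef
    have hu : ∀ x, HasDerivAt u (φ x) x := fun x => (hφ.integral_hasStrictDerivAt 0 x).hasDerivAt
    have hw : ∀ x, HasDerivAt w (x * φ x) x := fun x =>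
      ((continuous_id.mul hφ).integral_hasStrictDerivAt 0 x).hasDerivAt
    set F := fun x : ℝ => (w x - x * u x + x^2/2*C + E)/lam with hFdef
    set P := fun x : ℝ => (x*C - u x)/lam with hPdef
    have hF : ∀ x, HasDerivAt F (P x) x := by
      intro x
      have h := ((((hw x).sub ((hasDerivAt_id x).mul (hu x))).add
        (((hasDerivAt_pow 2 x).div_const 2).mul_const C)).add_const E).div_const lam
      refine h.congr_deriv ?_
      simp only [hPdef, id_eq]
      push_cast
      ring
    have hP : ∀ x, HasDerivAt P ((C - φ x)/lam) x := by
      intro x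
      exact (((hasDerivAt_mul_const C).sub (hu x)).div_const lam).congr_deriv rfl
    have hFφ : ∀ t ∈ Icc (0:ℝ) 1, F t = φ t := by
      intro t ht
      have h := hid t ht
      simp only [hFdef]
      rw [div_eq_iff hlam]
      linarith [h]
    have hF0 : F 0 = φ 0 := hFφ 0 ⟨le_refl 0, zero_le_one⟩
    have hu0 : u 0 = 0 := intervalIntegral.integral_same
    have hP0 : P 0 = 0 := by simp [hPdef, hu0]
    set A := φ 0 - C with hAdef
    rcases lt_or_gt_of_ne hlam with hneg | hpos
    · -- lam < 0 : impossible
      exfalso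
      set κ := (Real.sqrt (-lam))⁻¹ with hκdef
      have hκpos : 0 < κ := inv_pos.2 (Real.sqrt_pos.2 (by linarith))
      have hκne : κ ≠ 0 := ne_of_gt hκpos
      have hκ2 : κ^2 * lam = -1 := by
        rw [hκdef, inv_pow, Real.sq_sqrt (by linarith : (0:ℝ) ≤ -lam)]
        field_simp
      set G := fun x : ℝ => C + A * Real.cosh (κ*x) with hGdef
      set g := fun x : ℝ => (A*κ) * Real.sinh (κ*x) with hgdef
      have hG : ∀ x, HasDerivAt G (g x) x := fun x =>
        (((hasDerivAt_lin κ x).cosh.const_mul A).const_add C).congr_deriv (by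
          simp only [hgdef]; ring)
      have hg : ∀ x, HasDerivAt g ((C - G x)/lam) x := by
        intro x
        refine ((hasDerivAt_lin κ x).sinh.const_mul (A*κ)).congr_deriv ?_
        simp only [hGdef]
        rw [eq_div_iff hlam]
        linear_combination (A * Real.cosh (κ*x)) * hκ2
      have hFG0 : F 0 = G 0 := by
        rw [hF0]
        show φ 0 = C + A * Real.cosh (κ*0)
        rw [mul_zero, Real.cosh_zero, hAdef]; ring
      have hPg0 : P 0 = g 0 := by
        show P 0 = A*κ*Real.sinh (κ*0)
        rw [hP0, mul_zero, Real.sinh_zero, mul_zero]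
      have hsol := ode_unique lam C hlam φ F P G g hF hP hG hg hFφ hFG0 hPg0
      have hCint : C = C + A * Real.sinh κ / κ := by
        conv_lhs => rw [hCdef]
        have h1 : ∫ s in (0:ℝ)..1, φ s = ∫ s in (0:ℝ)..1, (C + A * Real.cosh (κ*s)) := by
          apply intervalIntegral.integral_congr
          intro s hs
          rw [uIcc_of_le zero_le_one] at hs
          exact hsol s hs
        rw [h1, intervalIntegral.integral_eq_sub_of_hasDerivAt
          (f := fun x : ℝ => C*x + A * Real.sinh (κ*x)/κ)
          (f' := fun x => C + A * Real.cosh (κ*x))]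
        · rw [mul_one, mul_zero, mul_zero, Real.sinh_zero, mul_zero, zero_div]
          ring
        · intro x _
          have h := (((hasDerivAt_id x).const_mul C).add
            (((hasDerivAt_lin κ x).sinh.const_mul A).div_const κ))
          refine h.congr_deriv ?_
          field_simp
        · exact (Continuous.add continuous_const (by fun_prop)).intervalIntegrable _ _
      have hA0 : A = 0 := by
        have h2 : A * Real.sinh κ / κ = 0 := by linarith [hCint]
        have h3 : A * Real.sinh κ = 0 := by
          field_simp at h2
          rw [mul_zero] at h2
          exact h2
        have hsinh : Real.sinh κ ≠ 0 := ne_of_gt (by rwa [Real.sinh_pos_iff])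
        exact (mul_eq_zero.1 h3).resolve_right hsinh
      exact const_contra lam hlam φ C (heq 0 ⟨le_refl 0, zero_le_one⟩)
        (fun t ht => by
          rw [hsol t ht]
          show C + A * Real.cosh (κ*t) = C
          rw [hA0]; ring) hne
    · -- lam > 0
      set ω := (Real.sqrt lam)⁻¹ with hωdef
      have hωpos : 0 < ω := inv_pos.2 (Real.sqrt_pos.2 hpos)
      have hωne : ω ≠ 0 := ne_of_gt hωpos
      have hω2 : ω^2 * lam = 1 := by
        rw [hωdef, inv_pow, Real.sq_sqrt (le_of_lt hpos)]
        field_simp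
      set G := fun x : ℝ => C + A * Real.cos (ω*x) with hGdef
      set g := fun x : ℝ => (-(A*ω)) * Real.sin (ω*x) with hgdef
      have hG : ∀ x, HasDerivAt G (g x) x := fun x =>
        (((hasDerivAt_lin ω x).cos.const_mul A).const_add C).congr_deriv (by
          simp only [hgdef]; ring)
      have hg : ∀ x, HasDerivAt g ((C - G x)/lam) x := by
        intro x
        refine ((hasDerivAt_lin ω x).sin.const_mul (-(A*ω))).congr_deriv ?_
        simp only [hGdef]
        rw [eq_div_iff hlam]
        linear_combination (-(A * Real.cos (ω*x))) * hω2
      have hFG0 : F 0 = G 0 := by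
        rw [hF0]
        show φ 0 = C + A * Real.cos (ω*0)
        rw [mul_zero, Real.cos_zero, hAdef]; ring
      have hPg0 : P 0 = g 0 := by
        show P 0 = -(A*ω)*Real.sin (ω*0)
        rw [hP0, mul_zero, Real.sin_zero, mul_zero]
      have hsol := ode_unique lam C hlam φ F P G g hF hP hG hg hFφ hFG0 hPg0
      have hCint : C = C + A * Real.sin ω / ω := by
        conv_lhs => rw [hCdef]
        have h1 : ∫ s in (0:ℝ)..1, φ s = ∫ s in (0:ℝ)..1, (C + A * Real.cos (ω*s)) := by
          apply intervalIntegral.integral_congr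
          intro s hs
          rw [uIcc_of_le zero_le_one] at hs
          exact hsol s hs
        rw [h1, intervalIntegral.integral_eq_sub_of_hasDerivAt
          (f := fun x : ℝ => C*x + A * Real.sin (ω*x)/ω)
          (f' := fun x => C + A * Real.cos (ω*x))]
        · rw [mul_one, mul_zero, mul_zero, Real.sin_zero, mul_zero, zero_div]
          ring
        · intro x _
          have h := (((hasDerivAt_id x).const_mul C).add
            (((hasDerivAt_lin ω x).sin.const_mul A).div_const ω))
          refine h.congr_deriv ?_
          field_simp
        · exact (Continuous.add continuous_const (by fun_prop)).intervalIntegrable _ _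
      have hAsin : A * Real.sin ω = 0 := by
        have h2 : A * Real.sin ω / ω = 0 := by linarith [hCint]
        field_simp at h2
        rw [mul_zero] at h2
        exact h2
      rcases mul_eq_zero.1 hAsin with hA0 | hsin0
      · exact absurd (const_contra lam hlam φ C (heq 0 ⟨le_refl 0, zero_le_one⟩)
          (fun t ht => by
            rw [hsol t ht]
            show C + A * Real.cos (ω*t) = C
            rw [hA0]; ring) hne) (fun h => h)
      · obtain ⟨m, hm⟩ := Real.sin_eq_zero_iff.1 hsin0
        have hmpos : 0 < m := by
          have : (0:ℝ) < (m:ℝ) := by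
            by_contra h
            push_neg at h
            have : (m:ℝ) * π ≤ 0 := mul_nonpos_of_nonpos_of_nonneg h (le_of_lt Real.pi_pos)
            linarith [hm ▸ hωpos]
          exact_mod_cast this
        refine ⟨(m-1).toNat, ?_⟩
        have hcast : (((m-1).toNat : ℝ)) + 1 = (m:ℝ) := by
          have h9 : (((m-1).toNat : ℤ)) = m - 1 := Int.toNat_of_nonneg (by omega)
          have h10 : (((m-1).toNat : ℝ)) = ((m:ℝ)) - 1 := by exact_mod_cast congrArg (Int.cast : ℤ → ℝ) h9
          rw [h10]; ring
        rw [hcast]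
        have : ((m:ℝ)*π)^2 * lam = 1 := by rw [hm]; exact hω2
        have hπ : π ≠ 0 := Real.pi_ne_zero
        have hmne : (m:ℝ) ≠ 0 := by positivity
        field_simp at this ⊢
        linarith [this]
  · exact trace_Kc
end

section
/- For the sum of d uncorrelated standard Wiener processes, W_d(t) = \sum_{j=1}^d W_j(t_j) on [0,1]^d, the approximation complexity satisfies n^{W_d}(\varepsilon) = 1 for all \varepsilon in [3^{-1/2}, 1) and all d in N. -/
open MeasureTheory Set

open scoped ENNReal

/-- Average case approximation complexity determined by the non-increasing eigenvalue
sequence `lam`: `n(ε) = min{ n ≥ 1 : ∑_{k>n} λ_k ≤ ε² ∑_k λ_k }`. -/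
noncomputable def apprComplexity (lam : ℕ → ℝ) (ε : ℝ) : ℕ :=
  sInf {n : ℕ | 0 < n ∧ (∑' k, lam (n + k)) ≤ ε^2 * ∑' k, lam k}



-- helpers
lemma integrable_of_bdd {α : Type*} [MeasurableSpace α] {μ : Measure α} [IsFiniteMeasure μ]
    {f : α → ℝ} (hm : AEStronglyMeasurable f μ) {C : ℝ} (h : ∀ᵐ x ∂μ, ‖f x‖ ≤ C) :
    Integrable f μ := ⟨hm, HasFiniteIntegral.of_bounded h⟩

lemma integrable_mul_of_sq {α : Type*} [MeasurableSpace α] {μ : Measure α} {f g : α → ℝ}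
    (hfm : AEStronglyMeasurable f μ) (hgm : AEStronglyMeasurable g μ)
    (hf : Integrable (fun x => f x ^ 2) μ) (hg : Integrable (fun x => g x ^ 2) μ) :
    Integrable (fun x => f x * g x) μ := by
  refine Integrable.mono' (((hf.add hg)).div_const 2) (hfm.mul hgm) ?_
  filter_upwards with x
  rw [Real.norm_eq_abs, abs_mul]
  have : ((fun x => f x ^ 2) + fun x => g x ^ 2) x = f x ^ 2 + g x ^ 2 := rfl
  rw [this]
  nlinarith [sq_nonneg (|f x| - |g x|), sq_abs (f x), sq_abs (g x), abs_nonneg (f x), abs_nonneg (g x)]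

lemma integrable_of_integral_sq_ne {α : Type*} [MeasurableSpace α] {μ : Measure α} {f : α → ℝ}
    (h : ∫ x, f x * f x ∂μ ≠ 0) : Integrable (fun x => f x * f x) μ := by
  by_contra hc
  exact h (integral_undef hc)



lemma int_icc_id : ∫ x in Icc (0:ℝ) 1, x = 1/2 := by
  rw [integral_Icc_eq_integral_Ioc, ← intervalIntegral.integral_of_le (by norm_num : (0:ℝ) ≤ 1)]
  simp [integral_id]

lemma int_icc_sub_sq : ∫ x in Icc (0:ℝ) 1, (x - x^2/2) = 1/3 := by
  rw [integral_Icc_eq_integral_Ioc, ← intervalIntegral.integral_of_le (by norm_num : (0:ℝ) ≤ 1)]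
  have : ∫ x in (0:ℝ)..1, (x - x^2/2) = (∫ x in (0:ℝ)..1, x) - ∫ x in (0:ℝ)..1, x^2/2 := by
    apply intervalIntegral.integral_sub <;> apply Continuous.intervalIntegrable <;> continuity
  rw [this]
  have h2 : ∫ x in (0:ℝ)..1, x^2/2 = (∫ x in (0:ℝ)..1, x^2)/2 := by
    rw [intervalIntegral.integral_div]
  rw [h2, integral_id, integral_pow]
  norm_num

lemma int_icc_min {t : ℝ} (ht : t ∈ Icc (0:ℝ) 1) : ∫ s in Icc (0:ℝ) 1, min t s = t - t^2/2 := by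
  obtain ⟨h0, h1⟩ := ht
  rw [integral_Icc_eq_integral_Ioc, ← intervalIntegral.integral_of_le (by norm_num : (0:ℝ) ≤ 1)]
  have hsplit := intervalIntegral.integral_add_adjacent_intervals (a := (0:ℝ)) (b := t) (c := 1)
    (f := fun s => min t s) (μ := volume) ?_ ?_
  · rw [← hsplit]
    have e1 : ∫ s in (0:ℝ)..t, min t s = ∫ s in (0:ℝ)..t, s := by
      apply intervalIntegral.integral_congr
      intro x hx
      rw [uIcc_of_le h0] at hx
      exact min_eq_right hx.2
    have e2 : ∫ s in t..(1:ℝ), min t s = ∫ s in t..(1:ℝ), t := by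
      apply intervalIntegral.integral_congr
      intro x hx
      rw [uIcc_of_le h1] at hx
      exact min_eq_left hx.1
    rw [e1, e2, integral_id, intervalIntegral.integral_const]
    simp
    ring
  · exact (continuous_const.min continuous_id).intervalIntegrable _ _
  · exact (continuous_const.min continuous_id).intervalIntegrable _ _

variable {d : ℕ}

lemma cube_vol : volume (Icc (0:Fin d → ℝ) 1) = 1 := by
  rw [Real.volume_Icc_pi]
  simp

lemma mem_cube_iff {t : Fin d → ℝ} : t ∈ Icc (0:Fin d → ℝ) 1 ↔ ∀ i, t i ∈ Icc (0:ℝ) 1 := by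
  simp [Pi.le_def, mem_Icc, forall_and]

lemma cube_marginal (f : ℝ → ℝ) (j : Fin d) :
    ∫ t in Icc (0:Fin d → ℝ) 1, f (t j) = ∫ x in Icc (0:ℝ) 1, f x := by
  classical
  set h : Fin d → ℝ → ℝ := fun i x => (Icc (0:ℝ) 1).indicator (fun y => if i = j then f y else 1) x with hh
  have key : ∀ t : Fin d → ℝ, (Icc (0:Fin d → ℝ) 1).indicator (fun t => f (t j)) t = ∏ i, h i (t i) := by
    intro t
    by_cases ht : t ∈ Icc (0:Fin d → ℝ) 1
    · rw [indicator_of_mem ht]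
      have hmem := mem_cube_iff.1 ht
      have : ∀ i, h i (t i) = if i = j then f (t i) else 1 := by
        intro i; rw [hh]; simp only; rw [indicator_of_mem (hmem i)]
      rw [Finset.prod_congr rfl (fun i _ => this i), Finset.prod_ite_eq' Finset.univ j (fun i => f (t i))]
      simp
    · rw [indicator_of_notMem ht]
      obtain ⟨i0, hi0⟩ : ∃ i, t i ∉ Icc (0:ℝ) 1 := by
        by_contra hc
        push_neg at hc
        exact ht (mem_cube_iff.2 hc)
      refine (Finset.prod_eq_zero (Finset.mem_univ i0) ?_).symm
      rw [hh]; simp only; rw [indicator_of_notMem hi0]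
  rw [← integral_indicator measurableSet_Icc]
  calc ∫ t : Fin d → ℝ, (Icc (0:Fin d → ℝ) 1).indicator (fun t => f (t j)) t
      = ∫ t : Fin d → ℝ, ∏ i, h i (t i) := by
        congr 1; funext t; exact key t
    _ = ∏ i, ∫ x : ℝ, h i x := MeasureTheory.integral_fintype_prod_eq_prod (ι := Fin d) h
    _ = ∫ x in Icc (0:ℝ) 1, f x := by
        rw [Finset.prod_eq_single j]
        · rw [hh]; simp only [if_pos rfl]
          rw [integral_indicator measurableSet_Icc]
          simp
        · intro i _ hij
          rw [hh]; simp only [if_neg hij]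
          rw [integral_indicator measurableSet_Icc]
          simp [Real.volume_Icc]
        · intro hj; exact absurd (Finset.mem_univ j) hj

noncomputable def nu (d : ℕ) : Measure (Fin d → ℝ) := volume.restrict (Icc (0:Fin d → ℝ) 1)

instance : IsProbabilityMeasure (nu d) := by
  constructor
  rw [nu, Measure.restrict_apply_univ, cube_vol]

lemma cube_ae_mem : ∀ᵐ t ∂(nu d), t ∈ Icc (0:Fin d → ℝ) 1 :=
  ae_restrict_mem measurableSet_Icc

lemma cube2_ae_mem : ∀ᵐ p ∂((nu d).prod (nu d)),
    p.1 ∈ Icc (0:Fin d → ℝ) 1 ∧ p.2 ∈ Icc (0:Fin d → ℝ) 1 := by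
  rw [nu, Measure.prod_restrict]
  filter_upwards [ae_restrict_mem (measurableSet_Icc.prod measurableSet_Icc)] with p hp
  exact ⟨hp.1, hp.2⟩

lemma cube2_min (j : Fin d) :
    ∫ p : (Fin d → ℝ) × (Fin d → ℝ), min (p.1 j) (p.2 j) ∂((nu d).prod (nu d)) = 1/3 := by
  have hmeas : Measurable fun p : (Fin d → ℝ) × (Fin d → ℝ) => min (p.1 j) (p.2 j) :=
    ((measurable_pi_apply j).comp measurable_fst).min ((measurable_pi_apply j).comp measurable_snd)
  have hint : Integrable (fun p : (Fin d → ℝ) × (Fin d → ℝ) => min (p.1 j) (p.2 j))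
      ((nu d).prod (nu d)) := by
    refine integrable_of_bdd hmeas.aestronglyMeasurable (C := 1) ?_
    filter_upwards [cube2_ae_mem] with p hp
    have h1 := (mem_cube_iff.1 hp.1 j)
    have h2 := (mem_cube_iff.1 hp.2 j)
    rw [Real.norm_eq_abs, abs_le]
    constructor
    · exact le_min (by linarith [h1.1]) (by linarith [h2.1])
    · exact le_trans (min_le_left _ _) h1.2
  rw [MeasureTheory.integral_prod _ hint]
  show (∫ t in Icc (0:Fin d → ℝ) 1, ∫ s in Icc (0:Fin d → ℝ) 1, min (t j) (s j)) = 1/3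
  have step : ∀ t ∈ Icc (0:Fin d → ℝ) 1,
      (∫ s in Icc (0:Fin d → ℝ) 1, min (t j) (s j)) = t j - (t j)^2/2 := by
    intro t ht
    rw [cube_marginal (fun x => min (t j) x) j]
    exact int_icc_min (mem_cube_iff.1 ht j)
  rw [setIntegral_congr_fun measurableSet_Icc step]
  rw [cube_marginal (fun x => x - x^2/2) j, int_icc_sub_sq]

lemma cube_coord (j : Fin d) : ∫ t, t j ∂(nu d) = 1/2 := by
  rw [nu, cube_marginal (fun x => x) j, int_icc_id]


lemma integrable_mul_of_sq' {α : Type*} [MeasurableSpace α] {μ : Measure α} {f g : α → ℝ}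
    (hfm : AEStronglyMeasurable f μ) (hgm : AEStronglyMeasurable g μ)
    (hf : Integrable (fun x => f x * f x) μ) (hg : Integrable (fun x => g x * g x) μ) :
    Integrable (fun x => f x * g x) μ := by
  apply integrable_mul_of_sq hfm hgm
  · simpa [pow_two] using hf
  · simpa [pow_two] using hg

def Gset (d : ℕ) : Set (Fin d → ℝ) := Icc 0 1 ∩ {t | ∀ j, 0 < t j}

lemma Gset_sub {d : ℕ} : Gset d ⊆ Icc 0 1 := inter_subset_left

lemma stepA {Ω : Type*} [MeasurableSpace Ω] (μ : Measure Ω) [IsProbabilityMeasure μ]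
    (d : ℕ)
    (W : Fin d → Ω → ℝ → ℝ)
    (hWm : ∀ j, Measurable (Function.uncurry (W j)))
    (hcov : ∀ i j, ∀ t ∈ Icc (0:ℝ) 1, ∀ s ∈ Icc (0:ℝ) 1,
      ∫ ω, W i ω t * W j ω s ∂μ = if i = j then min t s else 0)
    (𝕎 : Ω → (Fin d → ℝ) → ℝ)
    (h𝕎 : ∀ ω t, 𝕎 ω t = ∑ j, W j ω (t j)) :
    ∀ t ∈ Gset d, ∀ s ∈ Gset d,
      (∫ ω, 𝕎 ω t * 𝕎 ω s ∂μ) = ∑ j, min (t j) (s j) := by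
  classical
  intro t ht s hs
  have hmW : ∀ (j : Fin d) (x : ℝ), Measurable (fun ω => W j ω x) := fun j x =>
    (hWm j).comp (measurable_id.prodMk measurable_const)
  have hcoord : ∀ (u : Fin d → ℝ), u ∈ Gset d → ∀ j, u j ∈ Icc (0:ℝ) 1 ∧ 0 < u j := by
    intro u hu j
    exact ⟨⟨hu.1.1 j, hu.1.2 j⟩, hu.2 j⟩
  have hsq : ∀ (j : Fin d) (x : ℝ), x ∈ Icc (0:ℝ) 1 → 0 < x →
      Integrable (fun ω => W j ω x * W j ω x) μ := by
    intro j x hx hx0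
    apply integrable_of_integral_sq_ne
    rw [hcov j j x hx x hx]
    simp [ne_of_gt hx0]
  have hprod : ∀ i j : Fin d, Integrable (fun ω => W i ω (t i) * W j ω (s j)) μ := by
    intro i j
    exact integrable_mul_of_sq' (hmW i (t i)).aestronglyMeasurable
      (hmW j (s j)).aestronglyMeasurable
      (hsq i (t i) (hcoord t ht i).1 (hcoord t ht i).2)
      (hsq j (s j) (hcoord s hs j).1 (hcoord s hs j).2)
  have expand : (fun ω => 𝕎 ω t * 𝕎 ω s) = fun ω => ∑ i, ∑ j, W i ω (t i) * W j ω (s j) := by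
    funext ω
    rw [h𝕎 ω t, h𝕎 ω s, Finset.sum_mul_sum]
  rw [expand]
  rw [integral_finset_sum _ (fun i _ => integrable_finset_sum _ (fun j _ => hprod i j))]
  have : ∀ i ∈ Finset.univ, ∫ ω, ∑ j, W i ω (t i) * W j ω (s j) ∂μ
      = ∑ j, ∫ ω, W i ω (t i) * W j ω (s j) ∂μ := fun i _ =>
    integral_finset_sum _ (fun j _ => hprod i j)
  rw [Finset.sum_congr rfl this]
  have hval : ∀ i j : Fin d, ∫ ω, W i ω (t i) * W j ω (s j) ∂μ
      = if i = j then min (t i) (s j) else 0 := fun i j =>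
    hcov i j (t i) (hcoord t ht i).1 (s j) (hcoord s hs j).1
  simp_rw [hval]
  rw [Finset.sum_comm]
  simp

lemma measurableSet_Gset (d : ℕ) : MeasurableSet (Gset d) := by
  apply measurableSet_Icc.inter
  have : {t : Fin d → ℝ | ∀ j, 0 < t j} = ⋂ j, (fun t : Fin d → ℝ => t j) ⁻¹' Ioi 0 := by
    ext t; simp [mem_iInter]
  rw [this]
  exact MeasurableSet.iInter fun j => (measurable_pi_apply j) measurableSet_Ioi

lemma diag_summable (d : ℕ) (hd : 0 < d) (lam : ℕ → ℝ) (ψ : ℕ → (Fin d → ℝ) → ℝ)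
    (hK : ∀ t ∈ Gset d, ∀ s ∈ Gset d,
      ∑' k, lam k * ψ k t * ψ k s = ∑ j, min (t j) (s j)) :
    ∀ t ∈ Gset d, Summable (fun k => lam k * ψ k t * ψ k t) := by
  intro t ht
  by_contra hc
  have h0 := tsum_eq_zero_of_not_summable hc
  rw [hK t ht t ht] at h0
  have : Nonempty (Fin d) := ⟨⟨0, hd⟩⟩
  have hpos : 0 < ∑ j, min (t j) (t j) := by
    apply Finset.sum_pos (fun j _ => ?_) Finset.univ_nonempty
    simp [ht.2 j]
  exact absurd h0 (ne_of_gt hpos)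

lemma measurable_version (d : ℕ) (hd : 0 < d) (lam : ℕ → ℝ) (ψ : ℕ → (Fin d → ℝ) → ℝ)
    (hnonneg : ∀ k, 0 ≤ lam k)
    (hK : ∀ t ∈ Gset d, ∀ s ∈ Gset d,
      ∑' k, lam k * ψ k t * ψ k s = ∑ j, min (t j) (s j)) :
    ∃ g : ℕ → (Fin d → ℝ) → ℝ, (∀ k, Measurable (g k)) ∧
      (∀ k, lam k ≠ 0 → ∀ u ∈ Gset d, g k u = ψ k u) ∧
      (∀ k, lam k = 0 → g k = fun _ => 0) := by
  classical
  -- the ℓ² feature map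
  have hsummable : ∀ t ∈ Gset d, Summable (fun k => lam k * ψ k t * ψ k t) :=
    diag_summable d hd lam ψ hK
  set a : (Fin d → ℝ) → ℕ → ℝ := fun t k => Real.sqrt (lam k) * ψ k t with ha
  have haa : ∀ t k, a t k * a t k = lam k * ψ k t * ψ k t := by
    intro t k
    rw [ha]; simp only
    rw [show Real.sqrt (lam k) * ψ k t * (Real.sqrt (lam k) * ψ k t)
      = (Real.sqrt (lam k) * Real.sqrt (lam k)) * (ψ k t * ψ k t) by ring,
      Real.mul_self_sqrt (hnonneg k)]
    ring
  have hmem : ∀ t ∈ Gset d, Memℓp (a t) 2 := by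
    intro t ht
    apply memℓp_gen
    have h2 : ((2 : ℝ≥0∞).toReal) = (2:ℝ) := by simp
    rw [h2]
    have : (fun k => ‖a t k‖ ^ (2:ℝ)) = fun k => lam k * ψ k t * ψ k t := by
      funext k
      have h3 : ‖a t k‖ ^ (2:ℝ) = ‖a t k‖ ^ (2:ℕ) := by
        rw [← Real.rpow_natCast ‖a t k‖ 2]; norm_num
      rw [h3, pow_two, Real.norm_eq_abs, abs_mul_abs_self, haa t k]
    rw [this]
    exact hsummable t ht
  set Φ : (Fin d → ℝ) → lp (fun _ : ℕ => ℝ) 2 :=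
    fun t => if h : t ∈ Gset d then (⟨a t, hmem t h⟩ : lp (fun _ : ℕ => ℝ) 2) else 0 with hΦ
  have hΦapp : ∀ t ∈ Gset d, ∀ k, (Φ t : ℕ → ℝ) k = a t k := by
    intro t ht k
    rw [hΦ]; simp only [dif_pos ht]
  have hΦ0 : ∀ t, t ∉ Gset d → Φ t = 0 := by
    intro t ht; rw [hΦ]; simp [dif_neg ht]
  have hinner : ∀ t ∈ Gset d, ∀ s ∈ Gset d,
      (inner ℝ (Φ t) (Φ s) : ℝ) = ∑ j, min (t j) (s j) := by
    intro t ht s hs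
    rw [lp.inner_eq_tsum, ← hK t ht s hs]
    congr 1
    funext k
    rw [hΦapp t ht k, hΦapp s hs k, RCLike.inner_apply']
    rw [ha]; simp only [starRingEnd_apply, star_trivial]
    rw [show Real.sqrt (lam k) * ψ k t * (Real.sqrt (lam k) * ψ k s)
      = (Real.sqrt (lam k) * Real.sqrt (lam k)) * (ψ k t * ψ k s) by ring,
      Real.mul_self_sqrt (hnonneg k)]
    ring
  have hnorm : ∀ t, ‖Φ t‖ ≤ Real.sqrt d := by
    intro t
    by_cases ht : t ∈ Gset d
    · have h1 : ‖Φ t‖ ^ 2 = (inner ℝ (Φ t) (Φ t) : ℝ) := (real_inner_self_eq_norm_sq _).symm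
      have h2 : (inner ℝ (Φ t) (Φ t) : ℝ) ≤ d := by
        rw [hinner t ht t ht]
        calc ∑ j, min (t j) (t j) ≤ ∑ _j : Fin d, (1:ℝ) :=
              Finset.sum_le_sum (fun j _ => by rw [min_self]; exact ht.1.2 j)
          _ = d := by simp
      have h3 : ‖Φ t‖ ^ 2 ≤ d := h1.trans_le h2
      calc ‖Φ t‖ = Real.sqrt (‖Φ t‖ ^ 2) := by rw [Real.sqrt_sq (norm_nonneg _)]
        _ ≤ Real.sqrt d := Real.sqrt_le_sqrt h3
    · rw [hΦ0 t ht]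
      simp [Real.sqrt_nonneg]
  set V := (Submodule.span ℝ (Φ '' (Gset d))).topologicalClosure with hV
  haveI : CompleteSpace V := (Submodule.isClosed_topologicalClosure _).completeSpace_coe
  have hΦmem : ∀ u ∈ Gset d, Φ u ∈ V :=
    fun u hu => (Submodule.le_topologicalClosure _)
      (Submodule.subset_span (mem_image_of_mem Φ hu))
  have hmeasV : ∀ w : lp (fun _ : ℕ => ℝ) 2, w ∈ V →
      Measurable (fun u : Fin d → ℝ => (inner ℝ (Φ u) w : ℝ)) := by
    intro w hw
    have hspan : ∀ w ∈ Submodule.span ℝ (Φ '' (Gset d)),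
        Measurable (fun u : Fin d → ℝ => (inner ℝ (Φ u) w : ℝ)) := by
      intro w hw
      induction hw using Submodule.span_induction with
      | mem x hx =>
        obtain ⟨t0, ht0, rfl⟩ := hx
        have : (fun u : Fin d → ℝ => (inner ℝ (Φ u) (Φ t0) : ℝ))
            = fun u => if u ∈ Gset d then ∑ j, min (u j) (t0 j) else 0 := by
          funext u
          by_cases hu : u ∈ Gset d
          · rw [if_pos hu, hinner u hu t0 ht0]
          · rw [if_neg hu, hΦ0 u hu, inner_zero_left]
        rw [this]
        refine Measurable.ite (measurableSet_Gset d) ?_ measurable_const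
        exact Finset.measurable_sum _ fun j _ =>
          (measurable_pi_apply j).min measurable_const
      | zero => simpa using measurable_const
      | add x y _ _ hx hy => simp only [inner_add_right]; exact hx.add hy
      | smul c x _ hx => simpa [inner_smul_right] using hx.const_mul c
    have hw2 : w ∈ closure ((Submodule.span ℝ (Φ '' (Gset d)) : Submodule ℝ _) : Set _) := hw
    obtain ⟨b, hb, hbtend⟩ := mem_closure_iff_seq_limit.1 hw2
    have : ∀ n, Measurable (fun u : Fin d → ℝ => (inner ℝ (Φ u) (b n) : ℝ)) :=
      fun n => hspan (b n) (hb n)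
    apply measurable_of_tendsto_metrizable this
    rw [tendsto_pi_nhds]
    intro u
    exact Filter.Tendsto.inner tendsto_const_nhds hbtend
  set w : ℕ → lp (fun _ : ℕ => ℝ) 2 :=
    fun k => (V.orthogonalProjectionOnto (lp.single 2 k (1:ℝ)) : lp (fun _ : ℕ => ℝ) 2) with hwdef
  have hwmem : ∀ k, w k ∈ V := fun k => SetLike.coe_mem _
  have hrepr : ∀ k, ∀ u ∈ Gset d, a u k = (inner ℝ (Φ u) (w k) : ℝ) := by
    intro k u hu
    have h1 : (inner ℝ (Φ u) (lp.single 2 k (1:ℝ)) : ℝ) = a u k := by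
      rw [lp.inner_single_right, hΦapp u hu k, RCLike.inner_apply]
      simp [starRingEnd_apply]
    have h2 : (inner ℝ (Φ u) (lp.single 2 k (1:ℝ) - w k) : ℝ) = 0 := by
      have hmem' : lp.single 2 k (1:ℝ) - w k ∈ Vᗮ :=
        Submodule.sub_starProjection_mem_orthogonal (K := V) _
      exact (Submodule.mem_orthogonal V _).1 hmem' (Φ u) (hΦmem u hu)
    rw [inner_sub_right] at h2
    rw [← h1]
    linarith
  refine ⟨fun k u => (Real.sqrt (lam k))⁻¹ * (inner ℝ (Φ u) (w k) : ℝ), ?_, ?_, ?_⟩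
  · intro k
    exact (hmeasV (w k) (hwmem k)).const_mul _
  · intro k hk u hu
    show (Real.sqrt (lam k))⁻¹ * (inner ℝ (Φ u) (w k) : ℝ) = ψ k u
    rw [← hrepr k u hu, ha]
    simp only
    rw [← mul_assoc, inv_mul_cancel₀ (Real.sqrt_ne_zero'.2 (lt_of_le_of_ne (hnonneg k) (Ne.symm hk))), one_mul]
  · intro k hk
    funext u
    show (Real.sqrt (lam k))⁻¹ * (inner ℝ (Φ u) (w k) : ℝ) = 0
    rw [hk]
    simp


lemma abs_term_le (l a b : ℝ) (hl : 0 ≤ l) :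
    |l * (a * b)| ≤ (l * (a * a) + l * (b * b)) / 2 := by
  have key : |a| * |b| ≤ (a * a + b * b)/2 := by
    nlinarith [sq_nonneg (|a| - |b|), abs_mul_abs_self a, abs_mul_abs_self b]
  calc |l * (a * b)| = l * (|a| * |b|) := by rw [abs_mul, abs_of_nonneg hl, abs_mul]
    _ ≤ l * ((a * a + b * b)/2) := mul_le_mul_of_nonneg_left key hl
    _ = (l * (a * a) + l * (b * b))/2 := by ring

lemma main_core (d : ℕ) (hd : 0 < d) (lam : ℕ → ℝ) (ψ : ℕ → (Fin d → ℝ) → ℝ)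
    (hmono : Antitone lam) (hnonneg : ∀ k, 0 ≤ lam k) (hsum : Summable lam)
    (horth : ∀ k l, ∫ t in Icc (0 : Fin d → ℝ) 1, ψ k t * ψ l t = if k = l then 1 else 0)
    (hK : ∀ t ∈ Gset d, ∀ s ∈ Gset d,
      ∑' k, lam k * ψ k t * ψ k s = ∑ j, min (t j) (s j)) :
    ∀ ε : ℝ, 1 / Real.sqrt 3 ≤ ε → ε < 1 → apprComplexity lam ε = 1 := by
  classical
  obtain ⟨g, hgm, hgψ, hg0⟩ := measurable_version d hd lam ψ hnonneg hK
  have hnu : nu d = volume.restrict (Icc (0:Fin d → ℝ) 1) := rfl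
  -- a.e. membership in Gset
  have hGnull : volume ((Gset d)ᶜ ∩ Icc (0:Fin d → ℝ) 1) = 0 := by
    have hsub : (Gset d)ᶜ ∩ Icc (0:Fin d → ℝ) 1 ⊆ ⋃ j, {t : Fin d → ℝ | t j = 0} := by
      intro t ⟨htG, htI⟩
      rw [Gset, compl_inter] at htG
      rcases htG with h1 | h2
      · exact absurd htI h1
      · simp only [mem_compl_iff, mem_setOf_eq, not_forall, not_lt] at h2
        obtain ⟨j, hj⟩ := h2
        exact mem_iUnion.2 ⟨j, le_antisymm hj (htI.1 j)⟩
    refine measure_mono_null hsub ?_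
    refine measure_iUnion_null fun j => ?_
    rw [volume_pi]
    exact Measure.pi_hyperplane _ j 0
  have hGae : ∀ᵐ t ∂(nu d), t ∈ Gset d := by
    rw [hnu, ae_iff]
    have : {t : Fin d → ℝ | ¬ t ∈ Gset d} = (Gset d)ᶜ := rfl
    rw [this, Measure.restrict_apply (measurableSet_Gset d).compl]
    exact hGnull
  have hGae2 : ∀ᵐ p ∂((nu d).prod (nu d)), p.1 ∈ Gset d ∧ p.2 ∈ Gset d := by
    rw [ae_iff]
    refine measure_mono_null (t := ((Gset d)ᶜ ×ˢ univ) ∪ (univ ×ˢ (Gset d)ᶜ)) ?_ ?_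
    · intro p hp
      simp only [mem_setOf_eq, not_and_or] at hp
      rcases hp with h | h
      · exact Or.inl ⟨h, mem_univ _⟩
      · exact Or.inr ⟨mem_univ _, h⟩
    · have hz : (nu d) (Gset d)ᶜ = 0 := ae_iff.1 hGae
      refine measure_union_null ?_ ?_ <;> rw [Measure.prod_prod, hz]
      · rw [zero_mul]
      · rw [mul_zero]
  -- statistics of the measurable versions
  have hgae : ∀ k, lam k ≠ 0 → g k =ᵐ[nu d] ψ k := by
    intro k hk
    filter_upwards [hGae] with t ht using hgψ k hk t ht
  have hgg_int : ∀ k l, Integrable (fun t => g k t * g l t) (nu d) := by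
    intro k l
    have hsq : ∀ k, Integrable (fun t => g k t * g k t) (nu d) := by
      intro k
      by_cases hk : lam k = 0
      · rw [hg0 k hk]
        simpa using integrable_const (0:ℝ)
      · apply integrable_of_integral_sq_ne
        have : ∫ t, g k t * g k t ∂(nu d) = ∫ t, ψ k t * ψ k t ∂(nu d) :=
          integral_congr_ae (((hgae k hk).mul (hgae k hk)))
        rw [this, hnu, horth k k, if_pos rfl]
        exact one_ne_zero
    exact integrable_mul_of_sq' (hgm k).aestronglyMeasurable (hgm l).aestronglyMeasurable
      (hsq k) (hsq l)
  have hgsq : ∀ k, lam k ≠ 0 → ∫ t, g k t * g k t ∂(nu d) = 1 := by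
    intro k hk
    rw [show ∫ t, g k t * g k t ∂(nu d) = ∫ t, ψ k t * ψ k t ∂(nu d) from integral_congr_ae ((hgae k hk).mul (hgae k hk)), hnu, horth k k, if_pos rfl]
  have horthg : ∀ k l, k ≠ l → ∫ t, g k t * g l t ∂(nu d) = 0 := by
    intro k l hkl
    by_cases hk : lam k = 0
    · rw [hg0 k hk]; simp
    by_cases hl : lam l = 0
    · rw [hg0 l hl]; simp
    rw [show ∫ t, g k t * g l t ∂(nu d) = ∫ t, ψ k t * ψ l t ∂(nu d) from integral_congr_ae ((hgae k hk).mul (hgae l hl)), hnu, horth k l, if_neg hkl]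
  have hgint : ∀ k, Integrable (g k) (nu d) := by
    intro k
    have h1 : Integrable (fun t => g k t * (1:ℝ)) (nu d) :=
      integrable_mul_of_sq' (hgm k).aestronglyMeasurable aestronglyMeasurable_const
        (hgg_int k k) (by simpa using integrable_const (1:ℝ))
    simpa using h1
  set c : ℕ → ℝ := fun k => ∫ t, g k t ∂(nu d) with hc
  have hc0 : ∀ k, lam k = 0 → c k = 0 := by
    intro k hk
    rw [hc]; simp only [hg0 k hk]; simp
  -- Bessel's inequality for the constant function 1
  have hbessel : ∀ F : Finset ℕ, ∑ k ∈ F, (c k)^2 ≤ 1 := by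
    intro F
    set h : (Fin d → ℝ) → ℝ := fun t => ∑ k ∈ F, c k * g k t with hh
    have hint : Integrable h (nu d) := integrable_finset_sum _ fun k _ => (hgint k).const_mul _
    have hsqint : Integrable (fun t => ∑ k ∈ F, ∑ l ∈ F, (c k * c l) * (g k t * g l t)) (nu d) :=
      integrable_finset_sum _ fun k _ => integrable_finset_sum _ fun l _ =>
        (hgg_int k l).const_mul _
    have hexp : ∀ t, (1 - h t)^2 = 1 - 2 * h t + ∑ k ∈ F, ∑ l ∈ F, (c k * c l) * (g k t * g l t) := by
      intro t
      have : h t * h t = ∑ k ∈ F, ∑ l ∈ F, (c k * c l) * (g k t * g l t) := by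
        rw [hh]
        simp only
        rw [Finset.sum_mul_sum]
        apply Finset.sum_congr rfl
        intro k _
        apply Finset.sum_congr rfl
        intro l _
        ring
      rw [← this]; ring
    have hnonneg' : 0 ≤ ∫ t, (1 - h t)^2 ∂(nu d) := integral_nonneg fun t => sq_nonneg _
    have hval : ∫ t, (1 - h t)^2 ∂(nu d) = 1 - ∑ k ∈ F, (c k)^2 := by
      have e1 : ∫ t, (1 - h t)^2 ∂(nu d)
          = ∫ t, (1 - 2 * h t + ∑ k ∈ F, ∑ l ∈ F, (c k * c l) * (g k t * g l t)) ∂(nu d) := by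
        congr 1; funext t; exact hexp t
      rw [e1]
      have hint1 : Integrable (fun t => 1 - 2 * h t) (nu d) := by
        have := (integrable_const (1:ℝ)).sub (hint.const_mul 2)
        exact this
      rw [integral_add hint1 hsqint]
      have eh : ∫ t, h t ∂(nu d) = ∑ k ∈ F, (c k)^2 := by
        rw [hh]
        simp only
        rw [integral_finset_sum _ fun k _ => (hgint k).const_mul _]
        apply Finset.sum_congr rfl
        intro k _
        rw [integral_const_mul, pow_two, hc]
      have eh2 : ∫ t, (2 * h t) ∂(nu d) = 2 * ∑ k ∈ F, (c k)^2 := by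
        rw [integral_const_mul, eh]
      have ehh : ∫ t, (∑ k ∈ F, ∑ l ∈ F, (c k * c l) * (g k t * g l t)) ∂(nu d)
          = ∑ k ∈ F, (c k)^2 := by
        rw [integral_finset_sum _ fun k _ => integrable_finset_sum _ fun l _ =>
          (hgg_int k l).const_mul _]
        have : ∀ k ∈ F, ∫ t, (∑ l ∈ F, (c k * c l) * (g k t * g l t)) ∂(nu d)
            = ∑ l ∈ F, (c k * c l) * ∫ t, g k t * g l t ∂(nu d) := by
          intro k _
          rw [integral_finset_sum _ fun l _ => (hgg_int k l).const_mul _]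
          exact Finset.sum_congr rfl fun l _ => integral_const_mul _ _
        rw [Finset.sum_congr rfl this]
        have hterm : ∀ k ∈ F, ∀ l ∈ F, (c k * c l) * ∫ t, g k t * g l t ∂(nu d)
            = if l = k then (c k)^2 else 0 := by
          intro k _ l _
          by_cases hkl : l = k
          · subst hkl
            by_cases hk : lam l = 0
            · rw [hc0 l hk]; simp
            · rw [hgsq l hk, if_pos rfl]; ring
          · rw [horthg k l (fun hh' => hkl hh'.symm), if_neg hkl, mul_zero]
        calc ∑ k ∈ F, ∑ l ∈ F, (c k * c l) * ∫ t, g k t * g l t ∂(nu d)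
            = ∑ k ∈ F, ∑ l ∈ F, (if l = k then (c k)^2 else 0) := by
              apply Finset.sum_congr rfl
              intro k hk'
              exact Finset.sum_congr rfl fun l hl => hterm k hk' l hl
          _ = ∑ k ∈ F, (c k)^2 := by
              apply Finset.sum_congr rfl
              intro k hk'
              rw [Finset.sum_ite_eq' F k (fun _ => (c k)^2), if_pos hk']
      have e2 : ∫ t, (1 - 2 * h t) ∂(nu d) = 1 - 2 * ∑ k ∈ F, (c k)^2 := by
        rw [integral_sub (integrable_const _) (hint.const_mul 2), integral_const_mul, eh,
          integral_const]
        simp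
      rw [e2, ehh]
      ring
    linarith [hnonneg'.trans_eq hval]
  -- diagonal comparison
  have hψsummable := diag_summable d hd lam ψ hK
  have hterm_nonneg : ∀ (t : Fin d → ℝ) k, 0 ≤ lam k * ψ k t * ψ k t := by
    intro t k
    rw [mul_assoc]
    exact mul_nonneg (hnonneg k) (mul_self_nonneg _)
  have hswap : ∀ t ∈ Gset d, ∀ F : Finset ℕ,
      ∑ k ∈ F, lam k * (g k t * g k t) = ∑ k ∈ F, lam k * ψ k t * ψ k t := by
    intro t ht F
    apply Finset.sum_congr rfl
    intro k _
    by_cases hk : lam k = 0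
    · rw [hk]; ring
    · rw [hgψ k hk t ht]; ring
  have hdiag_le : ∀ t ∈ Gset d, ∀ F : Finset ℕ,
      ∑ k ∈ F, lam k * (g k t * g k t) ≤ ∑ j, t j := by
    intro t ht F
    rw [hswap t ht F]
    have h1 : ∑ k ∈ F, lam k * ψ k t * ψ k t ≤ ∑' k, lam k * ψ k t * ψ k t :=
      (hψsummable t ht).sum_le_tsum F (fun k _ => hterm_nonneg t k)
    rw [hK t ht t ht] at h1
    simpa [min_self] using h1
  have hcoordle : ∀ t ∈ Icc (0:Fin d → ℝ) 1, (∑ j, t j) ≤ (d:ℝ) := by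
    intro t ht
    calc ∑ j, t j ≤ ∑ _j : Fin d, (1:ℝ) := Finset.sum_le_sum fun j _ => ht.2 j
      _ = d := by simp
  have hcoordint : Integrable (fun t : Fin d → ℝ => ∑ j, t j) (nu d) := by
    refine integrable_of_bdd (C := d) ?_ ?_
    · exact (Finset.measurable_sum Finset.univ fun j _ => measurable_pi_apply j).aestronglyMeasurable
    · filter_upwards [cube_ae_mem] with t ht
      rw [Real.norm_eq_abs, abs_le]
      refine ⟨?_, hcoordle t ht⟩
      have : (0:ℝ) ≤ ∑ j, t j := Finset.sum_nonneg fun j _ => ht.1 j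
      calc -(d:ℝ) ≤ 0 := by simp
        _ ≤ ∑ j, t j := this
  have hSle : ∑' k, lam k ≤ (d:ℝ)/2 := by
    apply hsum.tsum_le_of_sum_le
    intro F
    have hterm : ∀ k ∈ F, lam k = ∫ t, lam k * (g k t * g k t) ∂(nu d) := by
      intro k _
      by_cases hk : lam k = 0
      · rw [hk]; simp
      · rw [integral_const_mul, hgsq k hk, mul_one]
    rw [Finset.sum_congr rfl hterm,
      ← integral_finset_sum F (fun k _ => (hgg_int k k).const_mul (lam k))]
    have hintF : Integrable (fun t => ∑ k ∈ F, lam k * (g k t * g k t)) (nu d) :=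
      integrable_finset_sum F fun k _ => (hgg_int k k).const_mul (lam k)
    have hmono' : (fun t => ∑ k ∈ F, lam k * (g k t * g k t)) ≤ᵐ[nu d]
        fun t => ∑ j, t j := by
      filter_upwards [hGae] with t ht using hdiag_le t ht F
    calc ∫ t, (∑ k ∈ F, lam k * (g k t * g k t)) ∂(nu d)
        ≤ ∫ t, (∑ j, t j) ∂(nu d) := integral_mono_ae hintF hcoordint hmono'
      _ = ∑ j : Fin d, ∫ t, t j ∂(nu d) :=
          integral_finset_sum Finset.univ fun j _ => by
            refine integrable_of_bdd (C := 1) (measurable_pi_apply j).aestronglyMeasurable ?_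
            filter_upwards [cube_ae_mem] with t ht
            rw [Real.norm_eq_abs, abs_le]
            have h0 : (0:ℝ) ≤ t j := ht.1 j
            exact ⟨by linarith, ht.2 j⟩
      _ = (d:ℝ)/2 := by
          rw [Finset.sum_congr rfl fun j _ => cube_coord j]
          simp
          ring
  -- double integral of the kernel
  have hminint : ∀ j : Fin d, Integrable
      (fun p : (Fin d → ℝ) × (Fin d → ℝ) => min (p.1 j) (p.2 j)) ((nu d).prod (nu d)) := by
    intro j
    have hmeas : Measurable fun p : (Fin d → ℝ) × (Fin d → ℝ) => min (p.1 j) (p.2 j) :=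
      ((measurable_pi_apply j).comp measurable_fst).min ((measurable_pi_apply j).comp measurable_snd)
    refine integrable_of_bdd hmeas.aestronglyMeasurable (C := 1) ?_
    filter_upwards [cube2_ae_mem] with p hp
    have h1 := (mem_cube_iff.1 hp.1 j)
    have h2 := (mem_cube_iff.1 hp.2 j)
    rw [Real.norm_eq_abs, abs_le]
    exact ⟨le_min (by linarith [h1.1]) (by linarith [h2.1]),
      le_trans (min_le_left _ _) h1.2⟩
  set A := ∫ p : (Fin d → ℝ) × (Fin d → ℝ),
      (∑ j, min (p.1 j) (p.2 j)) ∂((nu d).prod (nu d)) with hA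
  have hA3 : A = (d:ℝ)/3 := by
    rw [hA, integral_finset_sum Finset.univ (fun j _ => hminint j),
      Finset.sum_congr rfl fun j _ => cube2_min j]
    simp
    ring
  have hprodint : ∀ k, Integrable
      (fun p : (Fin d → ℝ) × (Fin d → ℝ) => g k p.1 * g k p.2) ((nu d).prod (nu d)) :=
    fun k => (hgint k).mul_prod (hgint k)
  have hFNint : ∀ N, Integrable
      (fun p : (Fin d → ℝ) × (Fin d → ℝ) => ∑ k ∈ Finset.range N, lam k * (g k p.1 * g k p.2))
      ((nu d).prod (nu d)) :=
    fun N => integrable_finset_sum _ fun k _ => (hprodint k).const_mul _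
  have hFNval : ∀ N, ∫ p : (Fin d → ℝ) × (Fin d → ℝ),
      (∑ k ∈ Finset.range N, lam k * (g k p.1 * g k p.2)) ∂((nu d).prod (nu d))
      = ∑ k ∈ Finset.range N, lam k * (c k)^2 := by
    intro N
    rw [integral_finset_sum _ fun k _ => (hprodint k).const_mul _]
    apply Finset.sum_congr rfl
    intro k _
    rw [integral_const_mul, MeasureTheory.integral_prod_mul (f := g k) (g := g k)]
    rw [hc]
    ring
  have hbound : ∀ N, ∀ᵐ p ∂((nu d).prod (nu d)),
      ‖∑ k ∈ Finset.range N, lam k * (g k p.1 * g k p.2)‖ ≤ (d:ℝ) := by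
    intro N
    filter_upwards [hGae2] with p hp
    rw [Real.norm_eq_abs]
    calc |∑ k ∈ Finset.range N, lam k * (g k p.1 * g k p.2)|
        ≤ ∑ k ∈ Finset.range N, |lam k * (g k p.1 * g k p.2)| :=
          Finset.abs_sum_le_sum_abs _ _
      _ ≤ ∑ k ∈ Finset.range N,
          (lam k * (g k p.1 * g k p.1) + lam k * (g k p.2 * g k p.2))/2 :=
          Finset.sum_le_sum fun k _ => abs_term_le _ _ _ (hnonneg k)
      _ = ((∑ k ∈ Finset.range N, lam k * (g k p.1 * g k p.1))
          + ∑ k ∈ Finset.range N, lam k * (g k p.2 * g k p.2))/2 := by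
          rw [← Finset.sum_add_distrib, ← Finset.sum_div]
      _ ≤ ((∑ j, p.1 j) + ∑ j, p.2 j)/2 := by
          have b1 := hdiag_le p.1 hp.1 (Finset.range N)
          have b2 := hdiag_le p.2 hp.2 (Finset.range N)
          linarith
      _ ≤ (d:ℝ) := by
          have b1 := hcoordle p.1 hp.1.1
          have b2 := hcoordle p.2 hp.2.1
          linarith
  have hlimptwise : ∀ᵐ p ∂((nu d).prod (nu d)),
      Filter.Tendsto (fun N => ∑ k ∈ Finset.range N, lam k * (g k p.1 * g k p.2))
        Filter.atTop (nhds (∑ j, min (p.1 j) (p.2 j))) := by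
    filter_upwards [hGae2] with p hp
    have hs1 : Summable (fun k => lam k * ψ k p.1 * ψ k p.2) := by
      apply Summable.of_abs
      refine Summable.of_nonneg_of_le (fun k => abs_nonneg _) (fun k => ?_)
        (((hψsummable p.1 hp.1).add (hψsummable p.2 hp.2)).div_const 2)
      have h := abs_term_le (lam k) (ψ k p.1) (ψ k p.2) (hnonneg k)
      calc |lam k * ψ k p.1 * ψ k p.2| = |lam k * (ψ k p.1 * ψ k p.2)| := by rw [mul_assoc]
        _ ≤ (lam k * (ψ k p.1 * ψ k p.1) + lam k * (ψ k p.2 * ψ k p.2))/2 := h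
        _ = (lam k * ψ k p.1 * ψ k p.1 + lam k * ψ k p.2 * ψ k p.2)/2 := by ring
    have htt := hs1.hasSum.tendsto_sum_nat
    rw [hK p.1 hp.1 p.2 hp.2] at htt
    apply Filter.Tendsto.congr _ htt
    intro N
    apply Finset.sum_congr rfl
    intro k _
    by_cases hk : lam k = 0
    · rw [hk]; ring
    · rw [hgψ k hk p.1 hp.1, hgψ k hk p.2 hp.2]; ring
  have hDCT := MeasureTheory.tendsto_integral_of_dominated_convergence
    (bound := fun _ => (d:ℝ)) (fun N => (hFNint N).aestronglyMeasurable)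
    (integrable_const _) hbound hlimptwise
  have hlim2 : Filter.Tendsto (fun N => ∑ k ∈ Finset.range N, lam k * (c k)^2)
      Filter.atTop (nhds A) := by
    rw [hA]
    exact Filter.Tendsto.congr (fun N => hFNval N) hDCT
  have hlc_nonneg : ∀ k, 0 ≤ lam k * (c k)^2 := fun k =>
    mul_nonneg (hnonneg k) (sq_nonneg _)
  have hmonopart : Monotone (fun N => ∑ k ∈ Finset.range N, lam k * (c k)^2) := by
    apply monotone_nat_of_le_succ
    intro N
    rw [Finset.sum_range_succ]
    linarith [hlc_nonneg N]
  have hpartial_le : ∀ N, ∑ k ∈ Finset.range N, lam k * (c k)^2 ≤ A :=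
    fun N => hmonopart.ge_of_tendsto hlim2 N
  have hsummable_lc : Summable (fun k => lam k * (c k)^2) :=
    summable_of_sum_range_le hlc_nonneg hpartial_le
  have hAeq : ∑' k, lam k * (c k)^2 = A :=
    tendsto_nhds_unique hsummable_lc.hasSum.tendsto_sum_nat hlim2
  have hAle : A ≤ lam 0 := by
    rw [← hAeq]
    apply hsummable_lc.tsum_le_of_sum_le
    intro F
    calc ∑ k ∈ F, lam k * (c k)^2 ≤ ∑ k ∈ F, lam 0 * (c k)^2 :=
          Finset.sum_le_sum fun k _ =>
            mul_le_mul_of_nonneg_right (hmono (Nat.zero_le k)) (sq_nonneg _)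
      _ = lam 0 * ∑ k ∈ F, (c k)^2 := by rw [Finset.mul_sum]
      _ ≤ lam 0 * 1 := mul_le_mul_of_nonneg_left (hbessel F) (hnonneg 0)
      _ = lam 0 := mul_one _
  have hlam0 : (d:ℝ)/3 ≤ lam 0 := by
    rw [← hA3]
    exact hAle
  -- conclusion
  intro ε hε1 hε2
  have hS0 : 0 ≤ ∑' k, lam k := tsum_nonneg hnonneg
  have hsqrt3 : (0:ℝ) < Real.sqrt 3 := Real.sqrt_pos.2 (by norm_num)
  have hε2' : 1/3 ≤ ε^2 := by
    have h1 : (1/Real.sqrt 3)^2 ≤ ε^2 :=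
      pow_le_pow_left₀ (by positivity) hε1 2
    rw [div_pow, one_pow, Real.sq_sqrt (by norm_num : (0:ℝ) ≤ 3)] at h1
    exact h1
  have htail : (∑' k, lam (1 + k)) = (∑' k, lam k) - lam 0 := by
    have h := hsum.tsum_eq_zero_add
    have h2 : ∑' k, lam (1 + k) = ∑' k, lam (k + 1) := tsum_congr fun k => by rw [add_comm]
    rw [h2]
    linarith
  have hmem1 : 1 ∈ {n : ℕ | 0 < n ∧ (∑' k, lam (n + k)) ≤ ε^2 * ∑' k, lam k} := by
    refine ⟨one_pos, ?_⟩
    rw [htail]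
    have h23 : (2/3) * (∑' k, lam k) ≤ lam 0 := by
      have hh1 : (2/3) * (∑' k, lam k) ≤ (2/3) * ((d:ℝ)/2) :=
        mul_le_mul_of_nonneg_left hSle (by norm_num)
      have hh2 : (2/3) * ((d:ℝ)/2) = (d:ℝ)/3 := by ring
      linarith
    nlinarith [mul_le_mul_of_nonneg_right hε2' hS0]
  rw [apprComplexity]
  have hne : {n : ℕ | 0 < n ∧ (∑' k, lam (n + k)) ≤ ε^2 * ∑' k, lam k}.Nonempty := ⟨1, hmem1⟩
  have hmemInf := Nat.sInf_mem hne
  exact le_antisymm (Nat.sInf_le hmem1) hmemInf.1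

/-- for the sum `𝕎_d(t) = ∑_{j=1}^d W_j(t_j)` of `d` uncorrelated
standard Wiener processes, `n^{𝕎_d}(ε) = 1` for all `ε ∈ [3^{-1/2}, 1)` and all `d`. -/
theorem complexity_sum_wiener_eq_one
    {Ω : Type*} [MeasurableSpace Ω] (μ : Measure Ω) [IsProbabilityMeasure μ]
    (d : ℕ) (hd : 0 < d)
    (W : Fin d → Ω → ℝ → ℝ)
    (hWm : ∀ j, Measurable (Function.uncurry (W j)))
    (hmean : ∀ j, ∀ t ∈ Icc (0:ℝ) 1, ∫ ω, W j ω t ∂μ = 0)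
    (hcov : ∀ i j, ∀ t ∈ Icc (0:ℝ) 1, ∀ s ∈ Icc (0:ℝ) 1,
      ∫ ω, W i ω t * W j ω s ∂μ = if i = j then min t s else 0)
    (hL2 : ∀ j, Integrable (fun p : Ω × ℝ => (W j p.1 p.2)^2)
      (μ.prod (volume.restrict (Icc (0:ℝ) 1))))
    (𝕎 : Ω → (Fin d → ℝ) → ℝ)
    (h𝕎 : ∀ ω t, 𝕎 ω t = ∑ j, W j ω (t j))
    -- spectral data of the covariance operator of `𝕎_d` on `L₂([0,1]^d)`
    (lam : ℕ → ℝ) (ψ : ℕ → (Fin d → ℝ) → ℝ)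
    (hmono : Antitone lam) (hnonneg : ∀ k, 0 ≤ lam k) (hsum : Summable lam)
    (horth : ∀ k l, ∫ t in Icc (0 : Fin d → ℝ) 1, ψ k t * ψ l t
      = if k = l then 1 else 0)
    (hmercer : ∀ t ∈ Icc (0 : Fin d → ℝ) 1, ∀ s ∈ Icc (0 : Fin d → ℝ) 1,
      (∫ ω, 𝕎 ω t * 𝕎 ω s ∂μ) = ∑' k, lam k * ψ k t * ψ k s) :
    ∀ ε : ℝ, 1 / Real.sqrt 3 ≤ ε → ε < 1 → apprComplexity lam ε = 1 := by
  have hK : ∀ t ∈ Gset d, ∀ s ∈ Gset d,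
      ∑' k, lam k * ψ k t * ψ k s = ∑ j, min (t j) (s j) := by
    intro t ht s hs
    rw [← hmercer t (Gset_sub ht) s (Gset_sub hs)]
    exact stepA μ d W hWm hcov 𝕎 h𝕎 t ht s hs
  exact main_core d hd lam ψ hmono hnonneg hsum horth hK
end
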